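/- arXiv:2311.04140 — 8 statements merged into one kernel-verified Lean document; each statement's English description precedes it below -/
import Mathlib

section
/- Let G be an undirected graph and M a matching of G with |M| ≤ μ(G) − k, where μ(G) is the maximum matching size and k ≥ 1. Then there exists an M-augmenting path in G of length less than ⌊2·μ(G)/k⌋. -/
open Classical

namespace AltMatch

variable {V : Type*}

/-- `M` is a matching of `G`: a set of edges of `G` that pairwise share no vertex. -/
def IsMatching (G : SimpleGraph V) (M : Set (Sym2 V)) : Prop :=
  M ⊆ G.edgeSet ∧ ∀ e₁ ∈ M, ∀ e₂ ∈ M, e₁ ≠ e₂ → ∀ v : V, v ∈ e₁ → v ∉ e₂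

/-- `v` is unmatched by `M`. -/
def Unmatched (M : Set (Sym2 V)) (v : V) : Prop := ∀ e ∈ M, v ∉ e

/-- A walk is alternating (starting with a non-matching edge):
its `i`-th edge is in `M` iff `i` is odd. -/
def Alt {G : SimpleGraph V} {u v : V} (M : Set (Sym2 V)) (w : G.Walk u v) : Prop :=
  ∀ (i : ℕ) (h : i < w.edges.length), (w.edges.get ⟨i, h⟩ ∈ M ↔ i % 2 = 1)

/-- An alternating path (w.r.t. `M`) from `u` to `v`. -/
def IsAltPath (G : SimpleGraph V) (M : Set (Sym2 V)) {u v : V} (w : G.Walk u v) : Prop :=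
  w.IsPath ∧ Alt M w

/-- Parity of a natural number as a `Bool` (`true` = odd). -/
def parityOf (n : ℕ) : Bool := decide (n % 2 = 1)

/-- `altDist G M θ f v` : minimum length of an alternating path from `f` to `v`
of parity `θ` (`true` = odd), or `⊤` if none exists. -/
noncomputable def altDist (G : SimpleGraph V) (M : Set (Sym2 V)) (θ : Bool) (f v : V) : ℕ∞ :=
  sInf {n : ℕ∞ | ∃ w : G.Walk f v, IsAltPath G M w ∧ parityOf w.length = θ ∧ (w.length : ℕ∞) = n}

/-- `gam G M f v` : the parity of the shortest alternating path from `f` to `v`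
(`true` = odd). -/
noncomputable def gam (G : SimpleGraph V) (M : Set (Sym2 V)) (f v : V) : Bool :=
  if altDist G M true f v < altDist G M false f v then true else false

/-- `w` is a shortest `θ`-alternating path from `f` to `v`. -/
def IsShortestAlt (G : SimpleGraph V) (M : Set (Sym2 V)) (θ : Bool) (f v : V)
    (w : G.Walk f v) : Prop :=
  IsAltPath G M w ∧ parityOf w.length = θ ∧ (w.length : ℕ∞) = altDist G M θ f v

/-- An `M`-augmenting path: an alternating path of odd length between two distinct
unmatched vertices. -/
def IsAugPath (G : SimpleGraph V) (M : Set (Sym2 V)) {a b : V} (w : G.Walk a b) : Prop :=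
  a ≠ b ∧ Unmatched M a ∧ Unmatched M b ∧ IsAltPath G M w ∧ w.length % 2 = 1

/-- `μ(G)` : the maximum size of a matching of `G`. -/
noncomputable def matchingNumber (G : SimpleGraph V) : ℕ :=
  sSup {n : ℕ | ∃ M : Set (Sym2 V), IsMatching G M ∧ M.Finite ∧ M.ncard = n}

/-- An alternating base tree for `G`, `M`, `f`: a spanning tree of `G` rooted at `f`
(encoded by its parent function) such that for every `v ≠ f` with parent `u`,
`dist^{γ(v)}(v) = dist^{γ̄(v)}(u) + 1`. -/
structure AltBaseTree (G : SimpleGraph V) (M : Set (Sym2 V)) (f : V) where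
  parent : V → V
  parent_root : parent f = f
  parent_adj : ∀ v, v ≠ f → G.Adj (parent v) v
  parent_reaches : ∀ v, ∃ n : ℕ, parent^[n] v = f
  dist_eq : ∀ v, v ≠ f →
    altDist G M (gam G M f v) f v = altDist G M (!gam G M f v) f (parent v) + 1

namespace AltBaseTree

variable {G : SimpleGraph V} {M : Set (Sym2 V)} {f : V}

/-- `v` belongs to the subtree `T_t` of `T` rooted at `t` (`t` is an ancestor-or-self
of `v`). -/
def InSubtree (T : AltBaseTree G M f) (t v : V) : Prop := ∃ n : ℕ, T.parent^[n] v = t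

/-- `e` is an edge of the tree `T`. -/
def IsTreeEdge (T : AltBaseTree G M f) (e : Sym2 V) : Prop :=
  ∃ v, v ≠ f ∧ e = s(T.parent v, v)

/-- `e` is an outgoing edge of the subtree `T_t`: a non-tree edge of `G` with exactly
one endpoint inside `T_t`. -/
def IsOutgoing (T : AltBaseTree G M f) (t : V) (e : Sym2 V) : Prop :=
  e ∈ G.edgeSet ∧ ¬ T.IsTreeEdge e ∧
    ∃ x y : V, e = s(x, y) ∧ ¬ T.InSubtree t x ∧ T.InSubtree t y

end AltBaseTree

/-- Matching-parity of an edge: `true` (odd) iff `e ∈ M`. -/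
noncomputable def rho (M : Set (Sym2 V)) (e : Sym2 V) : Bool :=
  if e ∈ M then true else false

/-- Sum-level of an edge `e = {x,y}` : `dist^{ρ(e)}(x) + dist^{ρ(e)}(y)`. -/
noncomputable def levelSum (G : SimpleGraph V) (M : Set (Sym2 V)) (f : V) (e : Sym2 V) : ℕ∞ :=
  Sym2.lift ⟨fun x y => altDist G M (rho M e) f x + altDist G M (rho M e) f y,
    fun x y => add_comm _ _⟩ e

/-- Max-level of an edge `e = {x,y}` : `max (dist^{ρ(e)}(x)) (dist^{ρ(e)}(y))`. -/
noncomputable def levelMax (G : SimpleGraph V) (M : Set (Sym2 V)) (f : V) (e : Sym2 V) : ℕ∞ :=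
  Sym2.lift ⟨fun x y => max (altDist G M (rho M e) f x) (altDist G M (rho M e) f y),
    fun x y => max_comm _ _⟩ e

/-- The level of an edge: `(0,0)` for tree edges, and the lexicographic pair
`(sum-level, max-level)` otherwise. -/
noncomputable def level {G : SimpleGraph V} {M : Set (Sym2 V)} {f : V}
    (T : AltBaseTree G M f) (e : Sym2 V) : Lex (ℕ∞ × ℕ∞) :=
  if T.IsTreeEdge e then toLex ((0 : ℕ∞), (0 : ℕ∞))
  else toLex (levelSum G M f e, levelMax G M f e)

/-- The level of a walk: the maximum level of its edges. -/
noncomputable def walkLevel {G : SimpleGraph V} {M : Set (Sym2 V)} {f : V}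
    (T : AltBaseTree G M f) {a b : V} (w : G.Walk a b) : Lex (ℕ∞ × ℕ∞) :=
  (w.edges.map (level T)).foldr max (toLex ((0 : ℕ∞), (0 : ℕ∞)))

/-- `out` assigns to each vertex `v` (whose subtree has an outgoing edge) a
minimum-level outgoing edge of `T_v`. -/
def IsMOE {G : SimpleGraph V} {M : Set (Sym2 V)} {f : V}
    (T : AltBaseTree G M f) (out : V → Sym2 V) : Prop :=
  ∀ v, (∃ e, T.IsOutgoing v e) →
    T.IsOutgoing v (out v) ∧ ∀ e, T.IsOutgoing v e → level T (out v) ≤ level T e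

/-- Canonical tie-breaking rule for MOEs: if a minimum-level outgoing edge of `T_v`
incident to `v` exists, then `out v` is incident to `v`. -/
def CanonicalTie {G : SimpleGraph V} {M : Set (Sym2 V)} {f : V}
    (T : AltBaseTree G M f) (out : V → Sym2 V) : Prop :=
  ∀ v e, T.IsOutgoing v e → (∀ e', T.IsOutgoing v e' → level T e ≤ level T e') →
    v ∈ e → v ∈ out v

/-- Level of `out v`, with the virtual value `(∞,∞)` when `T_v` has no outgoing edge. -/
noncomputable def outLevel {G : SimpleGraph V} {M : Set (Sym2 V)} {f : V}
    (T : AltBaseTree G M f) (out : V → Sym2 V) (v : V) : Lex (ℕ∞ × ℕ∞) :=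
  if ∃ e, T.IsOutgoing v e then level T (out v) else toLex ((⊤ : ℕ∞), (⊤ : ℕ∞))

/-- `P` is a `θ`-extension of the pair `(s,t)`: a shortest `θ`-alternating path from
`f` to `t` passing through `s` with `level(P) < level(out(s))`. -/
def IsExtension {G : SimpleGraph V} {M : Set (Sym2 V)} {f : V}
    (T : AltBaseTree G M f) (out : V → Sym2 V) (θ : Bool) (s : V) {t : V}
    (P : G.Walk f t) : Prop :=
  IsShortestAlt G M θ f t P ∧ s ∈ P.support ∧ walkLevel T P < outLevel T out s

/-- `Q` is a `θ`-extendable path from `s` to `t`: the suffix `P[s,t]` of some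
`θ`-extension `P` of `(s,t)`. -/
def IsExtendablePath [DecidableEq V] {G : SimpleGraph V} {M : Set (Sym2 V)} {f : V}
    (T : AltBaseTree G M f) (out : V → Sym2 V) (θ : Bool) {s t : V}
    (Q : G.Walk s t) : Prop :=
  ∃ (P : G.Walk f t) (hs : s ∈ P.support), IsExtension T out θ s P ∧ P.dropUntil s hs = Q

end AltMatch

open AltMatch

namespace HKaux
variable {V : Type*}
noncomputable def pf (M : Set (Sym2 V)) (v : V) : V :=
  if h : ∃ u, s(v, u) ∈ M then h.choose else v
noncomputable def stepf (M N : Set (Sym2 V)) (i : ℕ) : V → V :=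
  if i % 2 = 0 then pf N else pf M
noncomputable def aseq (M N : Set (Sym2 V)) (o : ℕ) (a : V) : ℕ → V
  | 0 => a
  | t + 1 => stepf M N (o + t) (aseq M N o a t)
variable {G : SimpleGraph V} {M N : Set (Sym2 V)}
lemma pf_eq_of_mem (hM : IsMatching G M) {v u : V} (h : s(v, u) ∈ M) : pf M v = u := by
  have hex : ∃ u, s(v, u) ∈ M := ⟨u, h⟩
  rw [pf, dif_pos hex]
  have hu' : s(v, hex.choose) ∈ M := hex.choose_spec
  by_contra hne
  have hne2 : s(v, hex.choose) ≠ s(v, u) := by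
    intro he; exact hne (Sym2.congr_right.1 he)
  exact hM.2 _ hu' _ h hne2 v (by simp) (by simp)

lemma pf_mem (hM : IsMatching G M) {v : V} (h : pf M v ≠ v) : s(v, pf M v) ∈ M := by
  by_cases hex : ∃ u, s(v, u) ∈ M
  · obtain ⟨u, hu⟩ := hex
    rwa [pf_eq_of_mem hM hu]
  · exact absurd (by rw [pf, dif_neg hex]) h

lemma pf_adj (hM : IsMatching G M) {v : V} (h : pf M v ≠ v) : G.Adj v (pf M v) :=
  G.mem_edgeSet.1 (hM.1 (pf_mem hM h))

lemma pf_pf (hM : IsMatching G M) (v : V) : pf M (pf M v) = v := by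
  by_cases h : pf M v = v
  · rw [h, h]
  · exact pf_eq_of_mem hM (Sym2.eq_swap ▸ pf_mem hM h)

lemma unmatched_iff (hM : IsMatching G M) {v : V} : Unmatched M v ↔ pf M v = v := by
  constructor
  · intro hu
    rw [pf, dif_neg]
    rintro ⟨u, h⟩
    exact hu _ h (by simp)
  · intro hp e he hv
    obtain ⟨u, rfl⟩ := Sym2.mem_iff_exists.1 hv
    have h1 : pf M v = u := pf_eq_of_mem hM he
    have : G.Adj v u := G.mem_edgeSet.1 (hM.1 he)
    exact this.ne (hp.symm.trans h1)

lemma stepf_parity {i j : ℕ} (h : i % 2 = j % 2) : stepf M N i = stepf M N j := by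
  unfold stepf; rw [h]

lemma stepf_invol (hM : IsMatching G M) (hN : IsMatching G N) (i : ℕ) (v : V) :
    stepf M N i (stepf M N i v) = v := by
  unfold stepf; split <;> [exact pf_pf hN v; exact pf_pf hM v]

lemma aseq_congr {o o' : ℕ} (h : o % 2 = o' % 2) (a : V) (t : ℕ) :
    aseq M N o a t = aseq M N o' a t := by
  induction t with
  | zero => rfl
  | succ t ih =>
    show stepf M N (o + t) _ = stepf M N (o' + t) _
    rw [ih, show stepf M N (o+t) = stepf M N (o'+t) from stepf_parity (by omega)]

lemma aseq_succ (o : ℕ) (a : V) (t : ℕ) :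
    aseq M N o a (t + 1) = stepf M N (o + t) (aseq M N o a t) := rfl

lemma aseq_back (hM : IsMatching G M) (hN : IsMatching G N) (o : ℕ) (a : V) (t : ℕ) :
    aseq M N o a t = stepf M N (o + t) (aseq M N o a (t + 1)) := by
  rw [aseq_succ, stepf_invol hM hN]

/-- forward determinism -/
lemma aseq_fwd (o o' : ℕ) (a a' : V) (i j : ℕ) (hpar : (o + i) % 2 = (o' + j) % 2)
    (h : aseq M N o a i = aseq M N o' a' j) :
    ∀ t, aseq M N o a (i + t) = aseq M N o' a' (j + t) := by
  intro t
  induction t with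
  | zero => exact h
  | succ t ih =>
    rw [show i + (t + 1) = (i + t) + 1 from by omega, aseq_succ,
      show j + (t + 1) = (j + t) + 1 from by omega, aseq_succ, ih,
      show stepf M N (o + (i + t)) = stepf M N (o' + (j + t)) from stepf_parity (by omega)]

/-- backward determinism (single step, same parity) -/
lemma aseq_back_step (hM : IsMatching G M) (hN : IsMatching G N) {o : ℕ} {a : V} {i i' : ℕ}
    (hpar : i % 2 = i' % 2)
    (h : aseq M N o a (i + 1) = aseq M N o a (i' + 1)) :
    aseq M N o a i = aseq M N o a i' := by
  rw [aseq_back hM hN o a i, h,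
    show stepf M N (o+i) = stepf M N (o+i') from stepf_parity (by omega),
    ← aseq_back hM hN o a i']

/-- iterated backward determinism to index 0 (even gap) -/
lemma aseq_back_iter (hM : IsMatching G M) (hN : IsMatching G N) {a : V} {g : ℕ}
    (hg : g % 2 = 0) :
    ∀ i, aseq M N 0 a i = aseq M N 0 a (i + g) → a = aseq M N 0 a g := by
  intro i
  induction i with
  | zero => exact fun h => by simpa [aseq] using h
  | succ i ih =>
    intro h
    refine ih (aseq_back_step hM hN (by omega) ?_)
    rw [h]; congr 1; omega

/-- injectivity of an alive forced sequence from an M-unmatched start -/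
lemma aseq_inj (hM : IsMatching G M) (hN : IsMatching G N) {a : V} (ha : pf M a = a) {j : ℕ}
    (halive : ∀ t < j, aseq M N 0 a (t + 1) ≠ aseq M N 0 a t) :
    ∀ g i i', 1 ≤ g → i' = i + g → i' ≤ j → aseq M N 0 a i ≠ aseq M N 0 a i' := by
  intro g
  induction g using Nat.strong_induction_on with
  | _ g IH =>
    intro i i' hg hii hle heq
    subst hii
    rcases Nat.even_or_odd g with hev | hodd
    · -- even gap: go back to 0
      have hg2 : g % 2 = 0 := Nat.even_iff.1 hev
      have h0 : a = aseq M N 0 a g := aseq_back_iter hM hN hg2 i heq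
      have hstep : aseq M N 0 a g = pf M (aseq M N 0 a (g - 1)) := by
        conv_lhs => rw [show g = (g - 1) + 1 by omega]
        rw [aseq_succ]
        unfold stepf
        rw [if_neg (by omega)]
      by_cases hfix : aseq M N 0 a (g - 1) = a
      · -- stall at g - 1
        refine halive (g - 1) (by omega) ?_
        rw [show (g-1)+1 = g by omega, ← h0, hfix]
      · have hpm : pf M (aseq M N 0 a (g-1)) ≠ aseq M N 0 a (g-1) := by
          rw [← hstep, ← h0]; exact fun hh => hfix hh.symm
        have hmem : s(aseq M N 0 a (g-1), pf M (aseq M N 0 a (g-1))) ∈ M := pf_mem hM hpm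
        rw [← hstep, ← h0, Sym2.eq_swap] at hmem
        have : pf M a = aseq M N 0 a (g-1) := pf_eq_of_mem hM hmem
        exact hfix (by rw [← this, ha])
    · -- odd gap
      have hg2 : g % 2 = 1 := Nat.odd_iff.1 hodd
      rcases Nat.lt_or_ge g 2 with h2 | h2
      · -- g = 1 : stall
        have hg1 : g = 1 := by omega
        subst hg1
        exact halive i (by omega) heq.symm
      · -- reduce to gap g - 2
        have h1 : aseq M N 0 a (i + 1) = stepf M N i (aseq M N 0 a i) := by
          rw [aseq_succ]; congr 1; omega
        have h2' : aseq M N 0 a (i + g) = stepf M N (i + g - 1) (aseq M N 0 a (i + g - 1)) := by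
          conv_lhs => rw [show i + g = (i + g - 1) + 1 by omega]
          rw [aseq_succ]; congr 1; omega
        have hp : stepf M N i = stepf M N (i + g - 1) := stepf_parity (M := M) (N := N) (by omega)
        have hred : aseq M N 0 a (i + 1) = aseq M N 0 a (i + g - 1) := by
          rw [h1, heq, h2', hp, stepf_invol hM hN]
        exact IH (g - 2) (by omega) (i + 1) (i + g - 1) (by omega) (by omega) (by omega) hred

-- ============ new material ============
section Fin
variable [Fintype V]

lemma exists_stall (hM : IsMatching G M) (hN : IsMatching G N) {a : V} (ha : pf M a = a) :
    ∃ t, aseq M N 0 a (t + 1) = aseq M N 0 a t := by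
  by_contra hcon
  push_neg at hcon
  have halive : ∀ t < Fintype.card V, aseq M N 0 a (t + 1) ≠ aseq M N 0 a t :=
    fun t _ => hcon t
  have hinj : Function.Injective (fun i : Fin (Fintype.card V + 1) => aseq M N 0 a i.1) := by
    intro i i' h
    by_contra hne
    rcases Nat.lt_or_ge i.1 i'.1 with hlt | hge
    · exact aseq_inj hM hN ha halive (i'.1 - i.1) i.1 i'.1 (by omega) (by omega)
        (by omega) h
    · have hlt : i'.1 < i.1 := by
        rcases Nat.lt_or_ge i'.1 i.1 with h' | h'
        · exact h'
        · exact absurd (Fin.ext (by omega)) hne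
      exact aseq_inj hM hN ha halive (i.1 - i'.1) i'.1 i.1 (by omega) (by omega)
        (by omega) h.symm
  have := Fintype.card_le_of_injective _ hinj
  simp at this

/-- the stopping time of the forced walk from `a` -/
noncomputable def stopT (M N : Set (Sym2 V)) (a : V) : ℕ :=
  sInf {t | aseq M N 0 a (t + 1) = aseq M N 0 a t}

lemma stopT_stall (hM : IsMatching G M) (hN : IsMatching G N) {a : V} (ha : pf M a = a) :
    aseq M N 0 a (stopT M N a + 1) = aseq M N 0 a (stopT M N a) :=
  Nat.sInf_mem (exists_stall hM hN ha)

lemma stopT_alive {a : V} {t : ℕ} (h : t < stopT M N a) :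
    aseq M N 0 a (t + 1) ≠ aseq M N 0 a t :=
  Nat.notMem_of_lt_sInf h

/-- characterization of `stopT` -/
lemma stopT_eq {a : V} {K : ℕ} (halive : ∀ t < K, aseq M N 0 a (t + 1) ≠ aseq M N 0 a t)
    (hstall : aseq M N 0 a (K + 1) = aseq M N 0 a K) : stopT M N a = K := by
  have h1 : stopT M N a ≤ K := Nat.sInf_le hstall
  rcases Nat.lt_or_ge (stopT M N a) K with h | h
  · exact absurd (Nat.sInf_mem (⟨K, hstall⟩ : {t | aseq M N 0 a (t + 1) = aseq M N 0 a t}.Nonempty))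
      (halive _ h)
  · omega

lemma stopT_pos (hM : IsMatching G M) (hN : IsMatching G N) {a : V} (ha : pf M a = a)
    (haN : pf N a ≠ a) : 1 ≤ stopT M N a := by
  rcases Nat.eq_zero_or_pos (stopT M N a) with h | h
  · exfalso
    have hst := stopT_stall hM hN ha
    rw [h] at hst
    have : aseq M N 0 a 1 = a := hst
    rw [aseq_succ] at this
    exact haN (by simpa [stepf, aseq] using this)
  · exact h

end Fin

-- ============ endpoint lemmas ============
section Fin2
variable [Fintype V]

noncomputable def Fend (M N : Set (Sym2 V)) (a : V) : V := aseq M N 0 a (stopT M N a)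

variable {G : SimpleGraph V} {M N : Set (Sym2 V)}

/-- reversal: the reversed walk is the forced walk from the endpoint with offset K+1 -/
lemma rev_val (hM : IsMatching G M) (hN : IsMatching G N) {a : V} (ha : pf M a = a) :
    ∀ t ≤ stopT M N a,
      aseq M N (stopT M N a + 1) (Fend M N a) t = aseq M N 0 a (stopT M N a - t) := by
  intro t
  induction t with
  | zero => intro _; rfl
  | succ t ih =>
    intro ht
    have ih' := ih (by omega)
    rw [aseq_succ, ih']
    set K := stopT M N a with hK
    have h1 : aseq M N 0 a (K - t) = stepf M N (K - t - 1) (aseq M N 0 a (K - t - 1)) := by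
      conv_lhs => rw [show K - t = (K - t - 1) + 1 by omega]
      rw [aseq_succ]; congr 1; omega
    rw [h1, show stepf M N (K + 1 + t) = stepf M N (K - t - 1) from stepf_parity (by omega),
      stepf_invol hM hN, show K - t - 1 = K - (t + 1) by omega]

lemma rev_alive (hM : IsMatching G M) (hN : IsMatching G N) {a : V} (ha : pf M a = a)
    {t : ℕ} (ht : t < stopT M N a) :
    aseq M N (stopT M N a + 1) (Fend M N a) (t + 1) ≠
      aseq M N (stopT M N a + 1) (Fend M N a) t := by
  rw [rev_val hM hN ha t (by omega), rev_val hM hN ha (t+1) (by omega)]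
  intro h
  have := stopT_alive (M := M) (N := N) (a := a) (t := stopT M N a - t - 1) (by omega)
  rw [show stopT M N a - t - 1 + 1 = stopT M N a - t by omega] at this
  refine this ?_
  rw [← h, show stopT M N a - t - 1 = stopT M N a - (t + 1) by omega]

lemma rev_stall (hM : IsMatching G M) (hN : IsMatching G N) {a : V} (ha : pf M a = a) :
    aseq M N (stopT M N a + 1) (Fend M N a) (stopT M N a + 1) =
      aseq M N (stopT M N a + 1) (Fend M N a) (stopT M N a) := by
  rw [aseq_succ, rev_val hM hN ha (stopT M N a) (le_refl _), Nat.sub_self]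
  show stepf M N (stopT M N a + 1 + stopT M N a) a = a
  have : (stopT M N a + 1 + stopT M N a) % 2 = 1 := by omega
  unfold stepf
  rw [if_neg (by omega)]
  exact ha

/-- endpoint determines start, given equal stop parities -/
lemma endpoint_unique (hM : IsMatching G M) (hN : IsMatching G N) {a a' : V}
    (ha : pf M a = a) (ha' : pf M a' = a') (hend : Fend M N a = Fend M N a')
    (hpar : stopT M N a % 2 = stopT M N a' % 2) : a = a' := by
  have hseq : ∀ t, aseq M N (stopT M N a + 1) (Fend M N a) t =
      aseq M N (stopT M N a' + 1) (Fend M N a') t := by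
    intro t; rw [hend]; exact aseq_congr (by omega) _ t
  have hKK : stopT M N a = stopT M N a' := by
    by_contra hne
    rcases Nat.lt_or_ge (stopT M N a) (stopT M N a') with h | h
    · refine rev_alive hM hN ha' (show stopT M N a < stopT M N a' from h) ?_
      rw [← hseq, ← hseq]
      exact rev_stall hM hN ha
    · have h' : stopT M N a' < stopT M N a := by omega
      refine rev_alive hM hN ha h' ?_
      rw [hseq, hseq]
      exact rev_stall hM hN ha'
  have h1 : aseq M N (stopT M N a + 1) (Fend M N a) (stopT M N a) = a := by
    rw [rev_val hM hN ha (stopT M N a) (le_refl _), Nat.sub_self]; rfl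
  have h2 : aseq M N (stopT M N a' + 1) (Fend M N a') (stopT M N a') = a' := by
    rw [rev_val hM hN ha' (stopT M N a') (le_refl _), Nat.sub_self]; rfl
  rw [← h1, ← h2, ← hKK, hseq]
  exact aseq_congr (by omega) _ _

/-- endpoint facts when the stop time is odd -/
lemma endpoint_odd (hM : IsMatching G M) (hN : IsMatching G N) {a : V} (ha : pf M a = a)
    (hodd : stopT M N a % 2 = 1) :
    pf M (Fend M N a) = Fend M N a ∧ pf N (Fend M N a) ≠ Fend M N a := by
  set K := stopT M N a with hK
  have hstall := stopT_stall hM hN ha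
  rw [aseq_succ] at hstall
  have h1 : pf M (Fend M N a) = Fend M N a := by
    have : stepf M N (0 + K) = pf M := by unfold stepf; rw [if_neg (by omega)]
    rw [this] at hstall; exact hstall
  refine ⟨h1, ?_⟩
  -- last edge is an N-edge
  have hK1 : 1 ≤ K := by omega
  have hlast : Fend M N a = pf N (aseq M N 0 a (K - 1)) := by
    show aseq M N 0 a K = _
    conv_lhs => rw [show K = (K - 1) + 1 by omega]
    rw [aseq_succ]
    congr 1
    unfold stepf; rw [if_pos (by omega)]
  have hne : aseq M N 0 a (K - 1) ≠ Fend M N a := by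
    intro h
    have := stopT_alive (M := M) (N := N) (a := a) (t := K - 1) (by omega)
    rw [show K - 1 + 1 = K by omega] at this
    exact this (by rw [h]; rfl)
  intro h
  rw [hlast, pf_pf hN, ← hlast] at h
  exact hne h

/-- endpoint facts when the stop time is even (and positive) -/
lemma endpoint_even (hM : IsMatching G M) (hN : IsMatching G N) {a : V} (ha : pf M a = a)
    (hev : stopT M N a % 2 = 0) (hpos : 1 ≤ stopT M N a) :
    pf N (Fend M N a) = Fend M N a ∧ pf M (Fend M N a) ≠ Fend M N a := by
  set K := stopT M N a with hK
  have hstall := stopT_stall hM hN ha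
  rw [aseq_succ] at hstall
  have h1 : pf N (Fend M N a) = Fend M N a := by
    have : stepf M N (0 + K) = pf N := by unfold stepf; rw [if_pos (by omega)]
    rw [this] at hstall; exact hstall
  refine ⟨h1, ?_⟩
  have hlast : Fend M N a = pf M (aseq M N 0 a (K - 1)) := by
    show aseq M N 0 a K = _
    conv_lhs => rw [show K = (K - 1) + 1 by omega]
    rw [aseq_succ]
    congr 1
    unfold stepf; rw [if_neg (by omega)]
  have hne : aseq M N 0 a (K - 1) ≠ Fend M N a := by
    intro h
    have := stopT_alive (M := M) (N := N) (a := a) (t := K - 1) (by omega)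
    rw [show K - 1 + 1 = K by omega] at this
    exact this (by rw [h]; rfl)
  intro h
  rw [hlast, pf_pf hM, ← hlast] at h
  exact hne h

/-- pairing: for odd stop time, the walk from the endpoint is the reversal -/
lemma pairing (hM : IsMatching G M) (hN : IsMatching G N) {a : V} (ha : pf M a = a)
    (hodd : stopT M N a % 2 = 1) :
    stopT M N (Fend M N a) = stopT M N a ∧ Fend M N (Fend M N a) = a := by
  set K := stopT M N a with hK
  set b := Fend M N a with hb
  have hcongr : ∀ t, aseq M N 0 b t = aseq M N (K + 1) b t :=
    fun t => aseq_congr (by omega) b t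
  have hstop : stopT M N b = K := by
    refine stopT_eq ?_ ?_
    · intro t ht
      rw [hcongr, hcongr]
      exact rev_alive hM hN ha ht
    · rw [hcongr, hcongr]
      exact rev_stall hM hN ha
  refine ⟨hstop, ?_⟩
  show aseq M N 0 b (stopT M N b) = a
  rw [hstop, hcongr, rev_val hM hN ha K (le_refl _), Nat.sub_self]
  rfl

end Fin2

section Fin3
variable [Fintype V] {G : SimpleGraph V} {M N : Set (Sym2 V)}

/-- a shared vertex at equal parities forces equal endpoints -/
lemma shared_same_parity (hM : IsMatching G M) (hN : IsMatching G N) {a a' : V}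
    (ha : pf M a = a) (ha' : pf M a' = a') {i j : ℕ}
    (hi : i ≤ stopT M N a) (hj : j ≤ stopT M N a') (hpar : i % 2 = j % 2)
    (hsh : aseq M N 0 a i = aseq M N 0 a' j) : Fend M N a = Fend M N a' := by
  have fwd := aseq_fwd 0 0 a a' i j (by omega) hsh
  have fwd' := aseq_fwd 0 0 a' a j i (by omega) hsh.symm
  have hstall : aseq M N 0 a' (j + (stopT M N a - i) + 1) =
      aseq M N 0 a' (j + (stopT M N a - i)) := by
    rw [← fwd, show j + (stopT M N a - i) + 1 = j + (stopT M N a - i + 1) by omega, ← fwd,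
      show i + (stopT M N a - i + 1) = stopT M N a + 1 by omega,
      show i + (stopT M N a - i) = stopT M N a by omega]
    exact stopT_stall hM hN ha
  have hstall' : aseq M N 0 a (i + (stopT M N a' - j) + 1) =
      aseq M N 0 a (i + (stopT M N a' - j)) := by
    rw [← fwd', show i + (stopT M N a' - j) + 1 = i + (stopT M N a' - j + 1) by omega, ← fwd',
      show j + (stopT M N a' - j + 1) = stopT M N a' + 1 by omega,
      show j + (stopT M N a' - j) = stopT M N a' by omega]
    exact stopT_stall hM hN ha'
  have h1 : stopT M N a' ≤ j + (stopT M N a - i) := Nat.sInf_le hstall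
  have h2 : stopT M N a ≤ i + (stopT M N a' - j) := Nat.sInf_le hstall'
  have heq : stopT M N a - i = stopT M N a' - j := by omega
  show aseq M N 0 a (stopT M N a) = aseq M N 0 a' (stopT M N a')
  rw [show stopT M N a = i + (stopT M N a - i) by omega, fwd, heq]
  congr 1
  omega

/-- distinct, non-paired augmenting walks are vertex disjoint -/
lemma walks_disjoint (hM : IsMatching G M) (hN : IsMatching G N) {a a' : V}
    (ha : pf M a = a) (ha' : pf M a' = a')
    (hodd : stopT M N a % 2 = 1) (hodd' : stopT M N a' % 2 = 1)
    (hne : a' ≠ a) (hne2 : a' ≠ Fend M N a) {i j : ℕ}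
    (hi : i ≤ stopT M N a) (hj : j ≤ stopT M N a') :
    aseq M N 0 a i ≠ aseq M N 0 a' j := by
  intro hsh
  by_cases hpar : i % 2 = j % 2
  · have hFF := shared_same_parity hM hN ha ha' hi hj hpar hsh
    exact hne (endpoint_unique hM hN ha' ha hFF.symm (by omega))
  · have hpair := pairing hM hN ha hodd
    have hbM : pf M (Fend M N a) = Fend M N a := (endpoint_odd hM hN ha hodd).1
    have hrev : aseq M N 0 (Fend M N a) (stopT M N a - i) = aseq M N 0 a i := by
      rw [aseq_congr (show (0:ℕ) % 2 = (stopT M N a + 1) % 2 by omega) (Fend M N a),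
        rev_val hM hN ha (stopT M N a - i) (by omega),
        show stopT M N a - (stopT M N a - i) = i by omega]
    have hsh2 : aseq M N 0 (Fend M N a) (stopT M N a - i) = aseq M N 0 a' j := by
      rw [hrev, hsh]
    have hFF := shared_same_parity hM hN hbM ha'
      (i := stopT M N a - i) (j := j)
      (by rw [hpair.1]; omega) hj (by omega) hsh2
    refine hne2 (endpoint_unique hM hN hbM ha' hFF ?_).symm
    rw [hpair.1]; omega

end Fin3

section Walks
variable {G : SimpleGraph V}

/-- build a walk along a function with adjacent consecutive values -/
noncomputable def walkOf (G : SimpleGraph V) (f : ℕ → V) :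
    ∀ c : ℕ, (∀ t, t < c → G.Adj (f t) (f (t + 1))) → G.Walk (f 0) (f c)
  | 0, _ => SimpleGraph.Walk.nil
  | c + 1, h =>
    (walkOf G f c (fun t ht => h t (by omega))).concat (h c (by omega))

lemma walkOf_length (f : ℕ → V) (c : ℕ) (h : ∀ t, t < c → G.Adj (f t) (f (t + 1))) :
    (walkOf G f c h).length = c := by
  induction c with
  | zero => rfl
  | succ c ih =>
    show ((walkOf G f c _).concat _).length = c + 1
    rw [SimpleGraph.Walk.length_concat, ih]

lemma walkOf_support (f : ℕ → V) (c : ℕ) (h : ∀ t, t < c → G.Adj (f t) (f (t + 1))) :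
    (walkOf G f c h).support = (List.range (c + 1)).map f := by
  induction c with
  | zero => rfl
  | succ c ih =>
    show ((walkOf G f c _).concat _).support = _
    rw [SimpleGraph.Walk.support_concat, ih, List.range_succ (n := c + 1)]
    simp

lemma walkOf_edges (f : ℕ → V) (c : ℕ) (h : ∀ t, t < c → G.Adj (f t) (f (t + 1))) :
    (walkOf G f c h).edges = (List.range c).map (fun t => s(f t, f (t + 1))) := by
  induction c with
  | zero => rfl
  | succ c ih =>
    show ((walkOf G f c _).concat _).edges = _
    rw [SimpleGraph.Walk.edges_concat, ih, List.range_succ]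
    simp

end Walks

section Aug
variable [Fintype V] {G : SimpleGraph V} {M N : Set (Sym2 V)}

lemma aseq_inj' (hM : IsMatching G M) (hN : IsMatching G N) {a : V} (ha : pf M a = a)
    {i j : ℕ} (hi : i ≤ stopT M N a) (hj : j ≤ stopT M N a)
    (h : aseq M N 0 a i = aseq M N 0 a j) : i = j := by
  have halive : ∀ t < stopT M N a, aseq M N 0 a (t + 1) ≠ aseq M N 0 a t :=
    fun t ht => stopT_alive ht
  by_contra hne
  rcases Nat.lt_or_ge i j with hlt | hge
  · exact aseq_inj hM hN ha halive (j - i) i j (by omega) (by omega) hj h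
  · exact aseq_inj hM hN ha halive (i - j) j i (by omega) (by omega) hi h.symm

lemma step_adj (hM : IsMatching G M) (hN : IsMatching G N) {a : V} (ha : pf M a = a)
    {t : ℕ} (ht : t < stopT M N a) :
    G.Adj (aseq M N 0 a t) (aseq M N 0 a (t + 1)) := by
  have hne : aseq M N 0 a (t + 1) ≠ aseq M N 0 a t := stopT_alive ht
  rw [aseq_succ] at hne ⊢
  unfold stepf at hne ⊢
  split at hne
  · rw [if_pos (by omega : (0 + t) % 2 = 0)] at *
    exact pf_adj hN hne
  · rw [if_neg (by assumption)]
    exact pf_adj hM hne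

lemma aug_walk (hM : IsMatching G M) (hN : IsMatching G N) {a : V}
    (ha : pf M a = a) (haN : pf N a ≠ a) (hodd : stopT M N a % 2 = 1) :
    ∃ w : G.Walk a (Fend M N a), IsAugPath G M w ∧ w.length = stopT M N a := by
  have adj : ∀ t, t < stopT M N a → G.Adj (aseq M N 0 a t) (aseq M N 0 a (t + 1)) :=
    fun t ht => step_adj hM hN ha ht
  refine ⟨walkOf G (aseq M N 0 a) (stopT M N a) adj, ?_, walkOf_length _ _ _⟩
  have hKpos : 1 ≤ stopT M N a := stopT_pos hM hN ha haN
  have hne_end : a ≠ Fend M N a := by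
    intro h
    have : (0 : ℕ) = stopT M N a := aseq_inj' hM hN ha (by omega) (le_refl _) h
    omega
  have hedge : ∀ (i : ℕ) (h : i < (walkOf G (aseq M N 0 a) (stopT M N a) adj).edges.length),
      (walkOf G (aseq M N 0 a) (stopT M N a) adj).edges.get ⟨i, h⟩ =
        s(aseq M N 0 a i, aseq M N 0 a (i + 1)) := by
    intro i h
    simp [walkOf_edges]
  have hlen : (walkOf G (aseq M N 0 a) (stopT M N a) adj).edges.length = stopT M N a := by
    rw [SimpleGraph.Walk.length_edges, walkOf_length]
  refine ⟨hne_end, (unmatched_iff hM).2 ha,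
    (unmatched_iff hM).2 (endpoint_odd hM hN ha hodd).1, ⟨?_, ?_⟩, ?_⟩
  · refine SimpleGraph.Walk.IsPath.mk' ?_
    erw [walkOf_support]
    refine List.Nodup.map_on ?_ (List.nodup_range (n := _))
    intro i hi j hj hij
    rw [List.mem_range] at hi hj
    exact aseq_inj' hM hN ha (by omega) (by omega) hij
  · intro i h
    erw [hedge i h]
    have hiK : i < stopT M N a := by rw [← hlen]; exact h
    constructor
    · intro hmem
      by_contra hpar
      have hpar0 : i % 2 = 0 := by omega
      have h1 : pf M (aseq M N 0 a i) = aseq M N 0 a (i + 1) := pf_eq_of_mem hM hmem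
      rcases Nat.eq_zero_or_pos i with h0 | h0
      · subst h0
        have : aseq M N 0 a 1 = a := by rw [← h1]; exact ha
        exact stopT_alive (show 0 < stopT M N a by omega) this
      · have h2 : aseq M N 0 a i = pf M (aseq M N 0 a (i - 1)) := by
          conv_lhs => rw [show i = (i - 1) + 1 by omega]
          rw [aseq_succ]
          congr 1
          unfold stepf
          rw [if_neg (by omega)]
        have h3 : pf M (aseq M N 0 a i) = aseq M N 0 a (i - 1) := by
          rw [h2, pf_pf hM]
        have h4 : aseq M N 0 a (i + 1) = aseq M N 0 a (i - 1) := by rw [← h1, h3]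
        have := aseq_inj' hM hN ha (show i + 1 ≤ stopT M N a by omega)
          (show i - 1 ≤ stopT M N a by omega) h4
        omega
    · intro hpar
      have h1 : aseq M N 0 a (i + 1) = pf M (aseq M N 0 a i) := by
        rw [aseq_succ]
        congr 1
        unfold stepf
        rw [if_neg (by omega)]
      have hne : pf M (aseq M N 0 a i) ≠ aseq M N 0 a i := by
        rw [← h1]; exact stopT_alive hiK
      rw [h1]
      exact pf_mem hM hne
  · erw [walkOf_length]; exact hodd

lemma odd_edge_mem (hM : IsMatching G M) (hN : IsMatching G N) {a : V} (ha : pf M a = a)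
    {t : ℕ} (ht : t < stopT M N a) (hodd : t % 2 = 1) :
    s(aseq M N 0 a t, aseq M N 0 a (t + 1)) ∈ M := by
  have h1 : aseq M N 0 a (t + 1) = pf M (aseq M N 0 a t) := by
    rw [aseq_succ]
    congr 1
    unfold stepf
    rw [if_neg (by omega)]
  have hne : pf M (aseq M N 0 a t) ≠ aseq M N 0 a t := by
    rw [← h1]; exact stopT_alive ht
  rw [h1]
  exact pf_mem hM hne

end Aug

section Count
variable [Fintype V] [DecidableEq V] {G : SimpleGraph V} {W : Set (Sym2 V)}

lemma card_filter_odd (K : ℕ) :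
    ((Finset.range K).filter (fun t => t % 2 = 1)).card = K / 2 := by
  induction K with
  | zero => rfl
  | succ K ih =>
    rw [Finset.range_add_one, Finset.filter_insert]
    by_cases h : K % 2 = 1
    · rw [if_pos h, Finset.card_insert_of_notMem (by simp), ih]; omega
    · rw [if_neg h, ih]; omega

lemma card_matched (hW : IsMatching G W) :
    (Finset.univ.filter fun v => pf W v ≠ v).card = 2 * W.ncard := by
  classical
  have hWfin : W.Finite := Set.toFinite W
  rw [Set.ncard_eq_toFinset_card W hWfin]
  have hmap : ∀ v ∈ (Finset.univ.filter fun v => pf W v ≠ v),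
      s(v, pf W v) ∈ hWfin.toFinset := by
    intro v hv
    rw [Set.Finite.mem_toFinset]
    exact pf_mem hW (by simpa using hv)
  rw [Finset.card_eq_sum_card_fiberwise hmap]
  rw [Finset.sum_congr rfl (g := fun _ => 2) ?_, Finset.sum_const, smul_eq_mul, mul_comm]
  intro e he
  rw [Set.Finite.mem_toFinset] at he
  induction e using Sym2.inductionOn with
  | hf x y =>
    have hadj : G.Adj x y := G.mem_edgeSet.1 (hW.1 he)
    have hpx : pf W x = y := pf_eq_of_mem hW he
    have hpy : pf W y = x := pf_eq_of_mem hW (Sym2.eq_swap ▸ he)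
    have hset : ((Finset.univ.filter fun v => pf W v ≠ v).filter
        (fun v => s(v, pf W v) = s(x, y))) = {x, y} := by
      ext v
      simp only [Finset.mem_filter, Finset.mem_univ, true_and, Finset.mem_insert,
        Finset.mem_singleton]
      constructor
      · rintro ⟨hne, heq⟩
        rcases Sym2.eq_iff.1 heq with ⟨h1, _⟩ | ⟨h1, _⟩
        · exact Or.inl h1
        · exact Or.inr h1
      · rintro (rfl | rfl)
        · exact ⟨by rw [hpx]; exact hadj.ne', by rw [hpx]⟩
        · exact ⟨by rw [hpy]; exact hadj.ne, by rw [hpy, Sym2.eq_swap]⟩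
    rw [hset, Finset.card_insert_of_notMem (by simp [hadj.ne]), Finset.card_singleton]

lemma exists_max_matching (G : SimpleGraph V) :
    ∃ N : Set (Sym2 V), IsMatching G N ∧ N.ncard = matchingNumber G := by
  classical
  have hbdd : BddAbove {n : ℕ | ∃ M : Set (Sym2 V), IsMatching G M ∧ M.Finite ∧ M.ncard = n} := by
    refine ⟨Fintype.card (Sym2 V), ?_⟩
    rintro n ⟨M', _, _, rfl⟩
    calc M'.ncard ≤ (Set.univ : Set (Sym2 V)).ncard :=
          Set.ncard_le_ncard (Set.subset_univ _) (Set.toFinite _)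
      _ = Fintype.card (Sym2 V) := by rw [Set.ncard_univ, Nat.card_eq_fintype_card]
  have hne : {n : ℕ | ∃ M : Set (Sym2 V), IsMatching G M ∧ M.Finite ∧ M.ncard = n}.Nonempty :=
    ⟨0, ∅, ⟨Set.empty_subset _, by simp⟩, Set.finite_empty, by simp⟩
  obtain ⟨N, hN, _, hcard⟩ := Nat.sSup_mem hne hbdd
  exact ⟨N, hN, hcard⟩

end Count
end HKaux

open HKaux

/-- Hopcroft–Karp: if `|M| + k ≤ μ(G)` with `k ≥ 1`, then there is an `M`-augmenting
path of length less than `⌊2·μ(G)/k⌋`. -/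
theorem hopcroft_karp_short_augmenting_path
    {V : Type*} [Fintype V] [DecidableEq V] (G : SimpleGraph V) (M : Set (Sym2 V))
    (hM : IsMatching G M) (k : ℕ) (hk : 1 ≤ k)
    (hcard : M.ncard + k ≤ matchingNumber G) :
    ∃ (a b : V) (w : G.Walk a b),
      IsAugPath G M w ∧ w.length < 2 * matchingNumber G / k := by
  classical
  obtain ⟨N, hN, hNcard⟩ := exists_max_matching G
  set Vm : Finset V := Finset.univ.filter (fun v => pf M v ≠ v) with hVm
  set Vn : Finset V := Finset.univ.filter (fun v => pf N v ≠ v) with hVn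
  set U : Finset V := Vn \ Vm with hU
  set Un : Finset V := Vm \ Vn with hUn
  set A : Finset V := U.filter (fun a => stopT M N a % 2 = 1) with hA
  have hmemU : ∀ a, a ∈ U ↔ (pf M a = a ∧ pf N a ≠ a) := by
    intro a
    simp only [hU, hVm, hVn, Finset.mem_sdiff, Finset.mem_filter, Finset.mem_univ, true_and,
      not_not]
    tauto
  have hmemA : ∀ a, a ∈ A ↔ (pf M a = a ∧ pf N a ≠ a ∧ stopT M N a % 2 = 1) := by
    intro a
    rw [hA, Finset.mem_filter, hmemU]
    tauto
  -- counting : |A| ≥ 2k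
  have hAcard : 2 * k ≤ A.card := by
    have hBle : (U.filter (fun a => ¬ stopT M N a % 2 = 1)).card ≤ Un.card := by
      refine Finset.card_le_card_of_injOn (Fend M N) ?_ ?_
      · intro a haB
        rw [Finset.mem_coe, Finset.mem_filter] at haB
        obtain ⟨haU, hev⟩ := haB
        rw [hmemU] at haU
        have h1 := stopT_pos hM hN haU.1 haU.2
        have h2 := endpoint_even hM hN haU.1 (by omega) h1
        rw [Finset.mem_coe, hUn, Finset.mem_sdiff, hVm, hVn]
        simp only [Finset.mem_filter, Finset.mem_univ, true_and, not_not]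
        exact ⟨h2.2, h2.1⟩
      · intro a haB a' haB' hFF
        rw [Finset.mem_coe, Finset.mem_filter, hmemU] at haB haB'
        exact endpoint_unique hM hN haB.1.1 haB'.1.1 hFF (by omega)
    have hAB : A.card + (U.filter (fun a => ¬ stopT M N a % 2 = 1)).card = U.card :=
      Finset.card_filter_add_card_filter_not _
    have hU1 : U.card + (Vn ∩ Vm).card = Vn.card := Finset.card_sdiff_add_card_inter _ _
    have hU2 : Un.card + (Vm ∩ Vn).card = Vm.card := Finset.card_sdiff_add_card_inter _ _
    have hint : (Vn ∩ Vm).card = (Vm ∩ Vn).card := by rw [Finset.inter_comm]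
    have hVmc : Vm.card = 2 * M.ncard := card_matched hM
    have hVnc : Vn.card = 2 * matchingNumber G := by rw [hVn, card_matched hN, hNcard]
    omega
  have hAne : A.Nonempty := Finset.card_pos.1 (by omega)
  obtain ⟨a₀, ha₀, hmin⟩ := A.exists_min_image (fun a => stopT M N a) hAne
  obtain ⟨ha₀M, ha₀N, ha₀odd⟩ := (hmemA a₀).1 ha₀
  -- the M-edge sets of the augmenting walks
  set Efin : V → Finset (Sym2 V) := fun a =>
    ((Finset.range (stopT M N a)).filter (fun t => t % 2 = 1)).image
      (fun t => s(aseq M N 0 a t, aseq M N 0 a (t + 1))) with hEfin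
  set Mfin : Finset (Sym2 V) := (Set.toFinite M).toFinset with hMfin
  have hMfc : Mfin.card = M.ncard := (Set.ncard_eq_toFinset_card M (Set.toFinite M)).symm
  have hEcard : ∀ a ∈ A, (Efin a).card = stopT M N a / 2 := by
    intro a haA
    obtain ⟨haM, haN', _⟩ := (hmemA a).1 haA
    rw [hEfin]
    rw [Finset.card_image_of_injOn, card_filter_odd]
    intro t ht t' ht' heq
    rw [Finset.mem_coe, Finset.mem_filter, Finset.mem_range] at ht ht'
    rcases Sym2.eq_iff.1 heq with ⟨h1, _⟩ | ⟨h1, h2⟩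
    · exact aseq_inj' hM hN haM (by omega) (by omega) h1
    · have e1 : t = t' + 1 := aseq_inj' hM hN haM (by omega) (by omega) h1
      have e2 : t + 1 = t' := aseq_inj' hM hN haM (by omega) (by omega) h2
      omega
  have hEsub : ∀ a ∈ A, Efin a ⊆ Mfin := by
    intro a haA e he
    obtain ⟨haM, _, _⟩ := (hmemA a).1 haA
    rw [hEfin] at he
    simp only [Finset.mem_image, Finset.mem_filter, Finset.mem_range] at he
    obtain ⟨t, ⟨ht, htodd⟩, rfl⟩ := he
    rw [hMfin, Set.Finite.mem_toFinset]
    exact odd_edge_mem hM hN haM ht htodd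
  -- each M-edge is used by at most two walks
  have hfiber : ∀ e ∈ Mfin, (A.filter (fun a => e ∈ Efin a)).card ≤ 2 := by
    intro e _
    rcases Finset.eq_empty_or_nonempty (A.filter (fun a => e ∈ Efin a)) with hemp | ⟨a₁, ha₁⟩
    · rw [hemp]; simp
    · have ha₁' := ha₁
      rw [Finset.mem_filter] at ha₁'
      obtain ⟨ha₁A, ha₁e⟩ := ha₁'
      obtain ⟨h1M, h1N, h1odd⟩ := (hmemA a₁).1 ha₁A
      have hsub : (A.filter (fun a => e ∈ Efin a)) ⊆ {a₁, Fend M N a₁} := by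
        intro a₂ ha₂
        rw [Finset.mem_filter] at ha₂
        obtain ⟨ha₂A, ha₂e⟩ := ha₂
        obtain ⟨h2M, h2N, h2odd⟩ := (hmemA a₂).1 ha₂A
        rw [Finset.mem_insert, Finset.mem_singleton]
        by_contra hcon
        push_neg at hcon
        obtain ⟨hne1, hne2⟩ := hcon
        rw [hEfin] at ha₁e ha₂e
        simp only [Finset.mem_image, Finset.mem_filter, Finset.mem_range] at ha₁e ha₂e
        obtain ⟨t₁, ⟨ht₁, _⟩, he₁⟩ := ha₁e
        obtain ⟨t₂, ⟨ht₂, _⟩, he₂⟩ := ha₂e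
        rw [← he₁] at he₂
        rcases Sym2.eq_iff.1 he₂ with ⟨h1, _⟩ | ⟨h1, _⟩
        · exact walks_disjoint hM hN h1M h2M h1odd h2odd hne1 hne2
            (i := t₁) (j := t₂) (by omega) (by omega) h1.symm
        · exact walks_disjoint hM hN h1M h2M h1odd h2odd hne1 hne2
            (i := t₁ + 1) (j := t₂) (by omega) (by omega) h1.symm
      calc (A.filter (fun a => e ∈ Efin a)).card ≤ ({a₁, Fend M N a₁} : Finset V).card :=
            Finset.card_le_card hsub
        _ ≤ 2 := by
            refine le_trans (Finset.card_insert_le _ _) ?_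
            simp
  -- sum bound
  have hsum_le : ∑ a ∈ A, (Efin a).card ≤ 2 * M.ncard := by
    have h1 : ∀ a ∈ A, (Efin a).card = ∑ e ∈ Mfin, if e ∈ Efin a then 1 else 0 := by
      intro a haA
      rw [← Finset.card_filter]
      congr 1
      rw [Finset.filter_mem_eq_inter, Finset.inter_eq_right.2 (hEsub a haA)]
    rw [Finset.sum_congr rfl h1, Finset.sum_comm]
    calc ∑ e ∈ Mfin, ∑ a ∈ A, (if e ∈ Efin a then 1 else 0)
        = ∑ e ∈ Mfin, (A.filter (fun a => e ∈ Efin a)).card := by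
          refine Finset.sum_congr rfl ?_
          intro e _
          rw [Finset.card_filter]
      _ ≤ ∑ _e ∈ Mfin, 2 := Finset.sum_le_sum hfiber
      _ = 2 * M.ncard := by rw [Finset.sum_const, smul_eq_mul, hMfc, mul_comm]
  -- lower bound on the sum
  have hlow : A.card * (stopT M N a₀ / 2) ≤ ∑ a ∈ A, (Efin a).card := by
    have := Finset.card_nsmul_le_sum A (fun a => (Efin a).card) (stopT M N a₀ / 2) ?_
    · simpa using this
    · intro a haA
      show stopT M N a₀ / 2 ≤ (Efin a).card
      rw [hEcard a haA]
      exact Nat.div_le_div_right (hmin a haA)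
  -- arithmetic
  have hK1 : 1 ≤ stopT M N a₀ := by omega
  have hstep1 : 2 * k * (stopT M N a₀ / 2) ≤ 2 * M.ncard := by
    calc 2 * k * (stopT M N a₀ / 2) ≤ A.card * (stopT M N a₀ / 2) :=
          Nat.mul_le_mul_right _ hAcard
      _ ≤ ∑ a ∈ A, (Efin a).card := hlow
      _ ≤ 2 * M.ncard := hsum_le
  have hdiv : 2 * (stopT M N a₀ / 2) = stopT M N a₀ - 1 := by omega
  have hstep2 : k * (stopT M N a₀ - 1) ≤ 2 * M.ncard := by
    calc k * (stopT M N a₀ - 1) = 2 * k * (stopT M N a₀ / 2) := by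
          rw [← hdiv]; ring
      _ ≤ 2 * M.ncard := hstep1
  have hstep3 : k * (stopT M N a₀ + 1) ≤ 2 * matchingNumber G := by
    calc k * (stopT M N a₀ + 1) = k * (stopT M N a₀ - 1) + k * 2 := by
          rw [← Nat.mul_add]
          congr 1
          omega
      _ ≤ 2 * M.ncard + 2 * k := by omega
      _ ≤ 2 * matchingNumber G := by omega
  have hfinal : stopT M N a₀ + 1 ≤ 2 * matchingNumber G / k :=
    (Nat.le_div_iff_mul_le (by omega)).2 (le_trans (le_of_eq (Nat.mul_comm _ _)) hstep3)
  obtain ⟨w, hw, hwlen⟩ := aug_walk hM hN ha₀M ha₀N ha₀odd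
  exact ⟨a₀, Fend M N a₀, w, hw, by omega⟩
end

section
/- Berge's theorem: a matching M of a graph G is maximum if and only if there exists no M-augmenting path in G. -/
open Classical

namespace AltMatch

variable {V : Type*}

section BergeProof

set_option linter.unusedSectionVars false

section Part1

variable [Fintype V] [DecidableEq V] {G : SimpleGraph V}

lemma part1_aux (n : ℕ) : ∀ (M : Set (Sym2 V)), IsMatching G M →
    ∀ (a b : V) (w : G.Walk a b), w.length = n → IsAugPath G M w →
    ∃ M₂ : Set (Sym2 V), IsMatching G M₂ ∧ M₂.ncard = M.ncard + 1 := by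
  induction n using Nat.strong_induction_on with
  | _ n IH =>
  intro M hM a b w hlen haug
  obtain ⟨hab, hua, hub, ⟨hpath, halt⟩, hodd⟩ := haug
  cases w with
  | nil => simp at hodd
  | cons h p =>
    rename_i v₁
    cases p with
    | nil =>
      -- base case : single edge
      refine ⟨insert s(a, b) M, ⟨?_, ?_⟩, ?_⟩
      · intro e he
        rcases he with rfl | he
        · exact G.mem_edgeSet.mpr h
        · exact hM.1 he
      · intro e₁ he₁ e₂ he₂ hne v hv₁ hv₂
        rcases he₁ with rfl | he₁ <;> rcases he₂ with rfl | he₂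
        · exact hne rfl
        · rcases Sym2.mem_iff.mp hv₁ with rfl | rfl
          · exact hua _ he₂ hv₂
          · exact hub _ he₂ hv₂
        · rcases Sym2.mem_iff.mp hv₂ with rfl | rfl
          · exact hua _ he₁ hv₁
          · exact hub _ he₁ hv₁
        · exact hM.2 e₁ he₁ e₂ he₂ hne v hv₁ hv₂
      · have hnm : s(a, b) ∉ M := fun hmem => hua _ hmem (Sym2.mem_mk_left a b)
        exact Set.ncard_insert_of_notMem hnm
    | cons h' q =>
      rename_i v₂
      -- w = cons h (cons h' q) : a - v₁ - v₂ - ... - b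
      set e₀ : Sym2 V := s(a, v₁) with he₀def
      set e₁ : Sym2 V := s(v₁, v₂) with he₁def
      have hedges : (SimpleGraph.Walk.cons h (SimpleGraph.Walk.cons h' q)).edges
          = e₀ :: e₁ :: q.edges := rfl
      have hlen0 : 0 < (SimpleGraph.Walk.cons h (SimpleGraph.Walk.cons h' q)).edges.length := by
        simp [hedges]
      have hlen1 : 1 < (SimpleGraph.Walk.cons h (SimpleGraph.Walk.cons h' q)).edges.length := by
        simp [hedges]
      have he₀ : e₀ ∉ M := by
        have := halt 0 hlen0
        simp [hedges] at this
        exact this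
      have he₁ : e₁ ∈ M := by
        have := halt 1 hlen1
        simp [hedges] at this
        exact this
      -- support facts
      have hsup : (SimpleGraph.Walk.cons h (SimpleGraph.Walk.cons h' q)).support
          = a :: v₁ :: q.support := rfl
      have hnodup := (SimpleGraph.Walk.isPath_def _).mp hpath
      rw [hsup] at hnodup
      have hqnodup : q.support.Nodup := (hnodup.of_cons).of_cons
      have hv₁q : v₁ ∉ q.support := (List.nodup_cons.mp (hnodup.of_cons)).1
      have haq : a ∉ v₁ :: q.support := (List.nodup_cons.mp hnodup).1
      have hv₂sup : v₂ ∈ q.support := q.start_mem_support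
      have hbsup : b ∈ q.support := q.end_mem_support
      have hav₂ : a ≠ v₂ := fun hh => haq (by rw [hh]; exact List.mem_cons_of_mem _ hv₂sup)
      have hv₁v₂ : v₁ ≠ v₂ := fun hh => hv₁q (hh ▸ hv₂sup)
      have hav₁ : a ≠ v₁ := fun hh => haq (hh ▸ List.mem_cons_self)
      have hbv₁ : b ≠ v₁ := fun hh => hv₁q (hh ▸ hbsup)
      have hba : b ≠ a := fun hh => hab hh.symm
      -- q has odd length
      have hqodd : q.length % 2 = 1 := by
        simp only [SimpleGraph.Walk.length_cons] at hodd
        omega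
      have hqpos : 0 < q.length := by omega
      have hv₂b : v₂ ≠ b := by
        cases q with
        | nil => simp at hqpos
        | cons h'' r =>
          rename_i v₃
          intro hh
          have : b ∈ r.support := r.end_mem_support
          have hnd := hqnodup
          rw [SimpleGraph.Walk.support_cons] at hnd
          exact (List.nodup_cons.mp hnd).1 (hh ▸ this)
      -- new matching M₁
      set M₁ : Set (Sym2 V) := insert e₀ (M \ {e₁}) with hM₁def
      have hM₁ : IsMatching G M₁ := by
        constructor
        · intro e he
          rcases he with rfl | he
          · exact G.mem_edgeSet.mpr h
          · exact hM.1 he.1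
        · intro f₁ hf₁ f₂ hf₂ hne v hv₁ hv₂
          have key : ∀ f ∈ M \ {e₁}, ∀ v : V, v ∈ e₀ → v ∉ f := by
            intro f hf v hv
            rcases Sym2.mem_iff.mp hv with rfl | rfl
            · exact hua _ hf.1
            · exact hM.2 e₁ he₁ f hf.1 (fun hh => hf.2 hh.symm) _ (Sym2.mem_mk_left _ v₂)
          rcases hf₁ with rfl | hf₁ <;> rcases hf₂ with rfl | hf₂
          · exact absurd rfl hne
          · exact key f₂ hf₂ v hv₁ hv₂
          · exact absurd hv₁ (key f₁ hf₁ v hv₂)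
          · exact hM.2 f₁ hf₁.1 f₂ hf₂.1 hne v hv₁ hv₂
      have hM₁card : M₁.ncard = M.ncard := by
        have h1 : e₀ ∉ M \ {e₁} := fun hh => he₀ hh.1
        rw [hM₁def, Set.ncard_insert_of_notMem h1, Set.ncard_diff_singleton_add_one he₁]
      -- q is an augmenting path for M₁
      have hqedges_ne : ∀ f ∈ q.edges, f ≠ e₀ ∧ f ≠ e₁ := by
        have hnd := hpath.isTrail.edges_nodup
        rw [hedges] at hnd
        intro f hf
        constructor
        · intro hh; exact (List.nodup_cons.mp hnd).1 (hh ▸ List.mem_cons_of_mem _ hf)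
        · intro hh; exact (List.nodup_cons.mp (List.nodup_cons.mp hnd).2).1 (hh ▸ hf)
      have hmem_iff : ∀ f ∈ q.edges, (f ∈ M₁ ↔ f ∈ M) := by
        intro f hf
        obtain ⟨hne0, hne1⟩ := hqedges_ne f hf
        simp [hM₁def, hne0, hne1]
      have hqaug : IsAugPath G M₁ q := by
        refine ⟨hv₂b, ?_, ?_, ⟨hpath.of_cons.of_cons, ?_⟩, hqodd⟩
        · -- v₂ unmatched by M₁
          intro f hf hv₂f
          rcases hf with rfl | hf
          · rcases Sym2.mem_iff.mp hv₂f with rfl | rfl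
            · exact hav₂ rfl
            · exact hv₁v₂ rfl
          · exact hM.2 e₁ he₁ f hf.1 (fun hh => hf.2 hh.symm) v₂ (Sym2.mem_mk_right v₁ v₂) hv₂f
        · -- b unmatched by M₁
          intro f hf hbf
          rcases hf with rfl | hf
          · rcases Sym2.mem_iff.mp hbf with rfl | rfl
            · exact hba rfl
            · exact hbv₁ rfl
          · exact hub f hf.1 hbf
        · -- Alt M₁ q
          intro i hi
          have hi2 : i + 2 < (SimpleGraph.Walk.cons h (SimpleGraph.Walk.cons h' q)).edges.length := by
            rw [hedges]; simpa using hi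
          have := halt (i + 2) hi2
          have hget : (SimpleGraph.Walk.cons h (SimpleGraph.Walk.cons h' q)).edges.get ⟨i + 2, hi2⟩
              = q.edges.get ⟨i, hi⟩ := by
            simp [hedges]
          rw [hget] at this
          rw [hmem_iff _ (q.edges.get_mem _)]
          rw [this]
          omega
      have hqlt : q.length < n := by
        simp only [SimpleGraph.Walk.length_cons] at hlen
        omega
      obtain ⟨M₂, hM₂, hM₂card⟩ := IH q.length hqlt M₁ hM₁ v₂ b q rfl hqaug
      exact ⟨M₂, hM₂, by rw [hM₂card, hM₁card]⟩

end Part1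

section Part2

set_option linter.unusedSectionVars false

variable [Fintype V] [DecidableEq V] {G : SimpleGraph V}

lemma matching_mono {S T : Set (Sym2 V)} (hT : IsMatching G T) (hST : S ⊆ T) :
    IsMatching G S :=
  ⟨hST.trans hT.1, fun e₁ he₁ e₂ he₂ => hT.2 e₁ (hST he₁) e₂ (hST he₂)⟩

lemma mem_ne {S : Set (Sym2 V)} (hS : IsMatching G S) {v u : V} (h : s(v, u) ∈ S) : v ≠ u := by
  intro hh
  exact G.irrefl (hh ▸ G.mem_edgeSet.mp (hS.1 h))

noncomputable def partner (S : Set (Sym2 V)) (v : V) : Option V :=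
  if h : ∃ u, s(v, u) ∈ S then some h.choose else none

lemma partner_eq_some_iff {S : Set (Sym2 V)} (hS : IsMatching G S) {v u : V} :
    partner S v = some u ↔ s(v, u) ∈ S := by
  unfold partner
  split
  · rename_i h
    have hc := h.choose_spec
    simp only [Option.some.injEq]
    constructor
    · rintro rfl; exact hc
    · intro hu
      by_cases heq : s(v, h.choose) = s(v, u)
      · exact Sym2.congr_right.mp heq
      · exact absurd (Sym2.mem_mk_left v u) (hS.2 _ hc _ hu heq v (Sym2.mem_mk_left _ _))
  · rename_i h
    simp only [reduceCtorEq, false_iff]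
    exact fun hu => h ⟨u, hu⟩

lemma partner_eq_none_iff {S : Set (Sym2 V)} {v : V} :
    partner S v = none ↔ ∀ u, s(v, u) ∉ S := by
  unfold partner
  split
  · rename_i h
    simp only [reduceCtorEq, false_iff]
    push_neg
    exact ⟨h.choose, h.choose_spec⟩
  · rename_i h
    push_neg at h
    simp [h]

lemma partner_symm {S : Set (Sym2 V)} (hS : IsMatching G S) {v u : V}
    (h : partner S v = some u) : partner S u = some v := by
  rw [partner_eq_some_iff hS] at h ⊢
  rwa [Sym2.eq_swap]

/-- The two "matchings" used by the alternating machine: `true ↦ M' \ M`, `false ↦ M \ M'`. -/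
def mset (M M' : Set (Sym2 V)) (b : Bool) : Set (Sym2 V) := if b then M' \ M else M \ M'

variable {M M' : Set (Sym2 V)}

lemma mset_matching (hM : IsMatching G M) (hM' : IsMatching G M') (b : Bool) :
    IsMatching G (mset M M' b) := by
  cases b
  · exact matching_mono hM Set.diff_subset
  · exact matching_mono hM' Set.diff_subset

/-- One step of the alternating machine. -/
noncomputable def mstep (M M' : Set (Sym2 V)) (p : V × Bool) : Option (V × Bool) :=
  (partner (mset M M' p.2) p.1).map (fun u => (u, !p.2))

lemma mstep_eq_some_iff (hM : IsMatching G M) (hM' : IsMatching G M') {v u : V} {b c : Bool} :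
    mstep M M' (v, b) = some (u, c) ↔ c = !b ∧ s(v, u) ∈ mset M M' b := by
  unfold mstep
  rw [Option.map_eq_some_iff]
  constructor
  · rintro ⟨a, ha, heq⟩
    obtain ⟨rfl, rfl⟩ := Prod.mk.injEq .. ▸ (Prod.mk.injEq _ _ _ _).mp heq
    exact ⟨rfl, (partner_eq_some_iff (mset_matching hM hM' b)).mp ha⟩
  · rintro ⟨rfl, hmem⟩
    exact ⟨u, (partner_eq_some_iff (mset_matching hM hM' b)).mpr hmem, rfl⟩

lemma mstep_none_iff {v : V} {b : Bool} :
    mstep M M' (v, b) = none ↔ ∀ u, s(v, u) ∉ mset M M' b := by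
  unfold mstep
  rw [Option.map_eq_none_iff, partner_eq_none_iff]

lemma mstep_inj (hM : IsMatching G M) (hM' : IsMatching G M') {s s' t : V × Bool}
    (h : mstep M M' s = some t) (h' : mstep M M' s' = some t) : s = s' := by
  obtain ⟨v, b⟩ := s; obtain ⟨v', b'⟩ := s'; obtain ⟨u, c⟩ := t
  rw [mstep_eq_some_iff hM hM'] at h h'
  obtain ⟨hc, hm⟩ := h; obtain ⟨hc', hm'⟩ := h'
  have hb : b = b' := by subst hc; exact Bool.not_inj hc'
  subst hb
  have hmm := mset_matching hM hM' b
  rw [Sym2.eq_swap] at hm hm'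
  have := (partner_eq_some_iff hmm).mpr hm
  have := (partner_eq_some_iff hmm).mpr hm'
  simp_all

lemma mstep_flip (hM : IsMatching G M) (hM' : IsMatching G M') {v u : V} {b c : Bool}
    (h : mstep M M' (v, b) = some (u, c)) : mstep M M' (u, b) = some (v, c) := by
  rw [mstep_eq_some_iff hM hM'] at h ⊢
  exact ⟨h.1, Sym2.eq_swap ▸ h.2⟩

/-- Iterated machine. -/
noncomputable def miter (M M' : Set (Sym2 V)) : ℕ → V × Bool → Option (V × Bool)
  | 0, s => some s
  | (n+1), s => (mstep M M' s).bind (miter M M' n)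

@[simp] lemma miter_zero {s : V × Bool} : miter M M' 0 s = some s := rfl

lemma miter_succ {n : ℕ} {s : V × Bool} :
    miter M M' (n + 1) s = (mstep M M' s).bind (miter M M' n) := rfl

lemma miter_one {s : V × Bool} : miter M M' 1 s = mstep M M' s := by
  cases h : mstep M M' s <;> simp [miter_succ, h, miter_zero]

lemma miter_add {m n : ℕ} {s : V × Bool} :
    miter M M' (m + n) s = (miter M M' m s).bind (miter M M' n) := by
  induction m generalizing s with
  | zero => simp
  | succ m IH =>
    have : m + 1 + n = (m + n) + 1 := by omega
    rw [this, miter_succ, miter_succ]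
    cases h : mstep M M' s
    · rfl
    · simp only [Option.bind_some]
      exact IH

lemma miter_succ' {n : ℕ} {s : V × Bool} :
    miter M M' (n + 1) s = (miter M M' n s).bind (mstep M M') := by
  rw [miter_add (m := n) (n := 1)]
  congr 1
  funext t
  exact miter_one

lemma miter_inj (hM : IsMatching G M) (hM' : IsMatching G M') :
    ∀ {n : ℕ} {s s' t : V × Bool}, miter M M' n s = some t → miter M M' n s' = some t → s = s' := by
  intro n
  induction n with
  | zero => intro s s' t h h'; simp at h h'; rw [h, h']
  | succ n IH =>
    intro s s' t h h'
    rw [miter_succ] at h h'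
    obtain ⟨a, ha, hit⟩ := Option.bind_eq_some_iff.mp h
    obtain ⟨a', ha', hit'⟩ := Option.bind_eq_some_iff.mp h'
    have : a = a' := IH hit hit'
    subst this
    exact mstep_inj hM hM' ha ha'

lemma no_palindrome (hM : IsMatching G M) (hM' : IsMatching G M') :
    ∀ (m : ℕ) (v : V) (b : Bool), miter M M' (2 * m + 1) (v, b) = some (v, !b) → False := by
  intro m
  induction m using Nat.strong_induction_on with
  | _ m IH =>
  intro v b h
  cases m with
  | zero =>
    rw [show 2 * 0 + 1 = 1 from rfl, miter_one, mstep_eq_some_iff hM hM'] at h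
    exact mem_ne (mset_matching hM hM' b) h.2 rfl
  | succ m =>
    -- 2*(m+1)+1 = (2*m+2)+1
    have hsplit : 2 * (m + 1) + 1 = (2 * m + 2) + 1 := by omega
    rw [hsplit, miter_succ'] at h
    obtain ⟨t, ht, hst⟩ := Option.bind_eq_some_iff.mp h
    -- first step
    have h1 : miter M M' (2 * m + 2) (v, b) = (mstep M M' (v, b)).bind (miter M M' (2 * m + 1)) :=
      miter_succ
    rw [h1] at ht
    obtain ⟨t₀, ht₀, hit₀⟩ := Option.bind_eq_some_iff.mp ht
    obtain ⟨y, c⟩ := t₀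
    have hy := (mstep_eq_some_iff hM hM').mp ht₀
    obtain ⟨rfl, hymem⟩ := hy
    -- last step: t = (w, b) with s(w,v) ∈ mset b, so w = y
    obtain ⟨w, d⟩ := t
    have hw := (mstep_eq_some_iff hM hM').mp hst
    obtain ⟨hd, hwmem⟩ := hw
    have hdb : d = b := by
      cases b <;> cases d <;> simp_all
    subst hdb
    -- partner uniqueness: y = w
    have hmm := mset_matching hM hM' d
    have p1 : partner (mset M M' d) v = some y := (partner_eq_some_iff hmm).mpr hymem
    have p2 : partner (mset M M' d) v = some w := (partner_eq_some_iff hmm).mpr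
      (Sym2.eq_swap ▸ hwmem)
    have hyw : y = w := by rw [p1] at p2; exact (Option.some.injEq _ _).mp p2
    subst hyw
    -- now miter (2m+1) (y, !d) = some (y, d)
    exact IH m (by omega) y (!d) (by simpa using hit₀)

def IsMSource (M M' : Set (Sym2 V)) (s : V × Bool) : Prop := ∀ t, mstep M M' t ≠ some s

lemma no_return {s : V × Bool} (hs : IsMSource M M' s) :
    ∀ n, 0 < n → miter M M' n s ≠ some s := by
  intro n hn h
  obtain ⟨m, rfl⟩ : ∃ m, n = m + 1 := ⟨n - 1, by omega⟩
  rw [miter_succ'] at h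
  obtain ⟨t, _, hst⟩ := Option.bind_eq_some_iff.mp h
  exact hs t hst

lemma source_no_cycle (hM : IsMatching G M) (hM' : IsMatching G M') :
    ∀ (i : ℕ) {s t : V × Bool} {d : ℕ}, 0 < d → IsMSource M M' s →
      miter M M' i s = some t → miter M M' d t = some t → False := by
  intro i
  induction i with
  | zero =>
    intro s t d hd hs h hcyc
    simp at h; subst h
    exact no_return hs d hd hcyc
  | succ i IH =>
    intro s t d hd hs h hcyc
    rw [miter_succ'] at h
    obtain ⟨p, hp, hpt⟩ := Option.bind_eq_some_iff.mp h
    -- cycle back-step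
    obtain ⟨m, rfl⟩ : ∃ m, d = m + 1 := ⟨d - 1, by omega⟩
    rw [miter_succ'] at hcyc
    obtain ⟨q, hq, hqt⟩ := Option.bind_eq_some_iff.mp hcyc
    have hpq : p = q := mstep_inj hM hM' hpt hqt
    subst hpq
    -- new cycle through p of length m+1
    have hcycp : miter M M' (m + 1) p = some p := by
      rw [miter_succ]
      rw [hpt]
      simpa using hq
    exact IH (by omega) hs hp hcycp

lemma miter_inj_times (hM : IsMatching G M) (hM' : IsMatching G M') {s t : V × Bool}
    {i j : ℕ} (hij : i < j) (hs : IsMSource M M' s)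
    (hi : miter M M' i s = some t) (hj : miter M M' j s = some t) : False := by
  have hsplit : j = i + (j - i) := by omega
  rw [hsplit, miter_add, hi] at hj
  simp only [Option.bind_some] at hj
  exact source_no_cycle hM hM' i (by omega) hs hi hj

lemma exists_terminal (hM : IsMatching G M) (hM' : IsMatching G M') {s : V × Bool}
    (hs : IsMSource M M' s) : ∃ n t, miter M M' n s = some t ∧ mstep M M' t = none := by
  by_contra hcon
  push_neg at hcon
  have hsome : ∀ n, ∃ t, miter M M' n s = some t := by
    intro n
    induction n with
    | zero => exact ⟨s, rfl⟩
    | succ n IH =>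
      obtain ⟨t, ht⟩ := IH
      cases hst : mstep M M' t with
      | none => exact absurd hst (hcon n t ht)
      | some u =>
        refine ⟨u, ?_⟩
        rw [miter_succ', ht]
        simpa using hst
  let f : ℕ → V × Bool := fun n => (hsome n).choose
  obtain ⟨i, j, hne, heq⟩ := Finite.exists_ne_map_eq_of_infinite f
  rcases Nat.lt_or_ge i j with hij | hij
  · refine miter_inj_times hM hM' hij hs (hsome i).choose_spec ?_
    rw [(hsome j).choose_spec]
    exact congrArg some heq.symm
  · have hij' : j < i := by omega
    refine miter_inj_times hM hM' hij' hs (hsome j).choose_spec ?_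
    rw [(hsome i).choose_spec]
    exact congrArg some heq

-- ### Walks from trajectories

lemma sym2_mk_out (e : Sym2 V) : s(e.out.1, e.out.2) = e := by
  exact e.out_eq

lemma walk_of_miter (hM : IsMatching G M) (hM' : IsMatching G M') :
    ∀ (n : ℕ) (v : V) (b : Bool) (u : V) (c : Bool),
      miter M M' n (v, b) = some (u, c) →
      ∃ w : G.Walk v u, w.length = n ∧
        (∀ i (h : i < w.edges.length),
          w.edges.get ⟨i, h⟩ ∈ mset M M' (if i % 2 = 0 then b else !b)) ∧
        (∀ i (h : i < w.support.length),
          miter M M' i (v, b) = some (w.support.get ⟨i, h⟩, if i % 2 = 0 then b else !b)) := by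
  intro n
  induction n with
  | zero =>
    intro v b u c h
    rw [miter_zero, Option.some.injEq] at h
    obtain ⟨rfl, rfl⟩ := Prod.mk.injEq .. ▸ (Prod.mk.injEq _ _ _ _).mp h
    refine ⟨SimpleGraph.Walk.nil, rfl, ?_, ?_⟩
    · intro i hi; simp at hi
    · intro i hi
      simp only [SimpleGraph.Walk.support_nil, List.length_cons, List.length_nil] at hi
      interval_cases i
      simp [miter_zero]
  | succ n IH =>
    intro v b u c h
    rw [miter_succ] at h
    obtain ⟨t, ht, hit⟩ := Option.bind_eq_some_iff.mp h
    obtain ⟨v₁, c₁⟩ := t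
    obtain ⟨rfl, hmem⟩ := (mstep_eq_some_iff hM hM').mp ht
    obtain ⟨w', hlen', hedges', hsup'⟩ := IH v₁ (!b) u c hit
    have hadj : G.Adj v v₁ := G.mem_edgeSet.mp ((mset_matching hM hM' b).1 hmem)
    refine ⟨SimpleGraph.Walk.cons hadj w', by simp [hlen'], ?_, ?_⟩
    · intro i hi
      cases i with
      | zero => simpa using hmem
      | succ j =>
        have hj : j < w'.edges.length := by
          simp only [SimpleGraph.Walk.edges_cons, List.length_cons] at hi; omega
        have hget : (SimpleGraph.Walk.cons hadj w').edges.get ⟨j + 1, hi⟩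
            = w'.edges.get ⟨j, hj⟩ := rfl
        rw [hget]
        have := hedges' j hj
        rcases Nat.mod_two_eq_zero_or_one j with h2 | h2
        · have h2' : (j + 1) % 2 = 1 := by omega
          simpa [h2, h2'] using this
        · have h2' : (j + 1) % 2 = 0 := by omega
          simpa [h2, h2', Bool.not_not] using this
    · intro i hi
      cases i with
      | zero => simp [miter_zero]
      | succ j =>
        have hj : j < w'.support.length := by
          simp only [SimpleGraph.Walk.support_cons, List.length_cons] at hi; omega
        have hget : (SimpleGraph.Walk.cons hadj w').support.get ⟨j + 1, hi⟩
            = w'.support.get ⟨j, hj⟩ := rfl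
        rw [hget]
        have hrec := hsup' j hj
        have hstep : miter M M' (j + 1) (v, b) = miter M M' j (v₁, !b) := by
          rw [miter_succ, ht]
          simp
        rw [hstep]
        rcases Nat.mod_two_eq_zero_or_one j with h2 | h2
        · have h2' : (j + 1) % 2 = 1 := by omega
          simpa [h2, h2'] using hrec
        · have h2' : (j + 1) % 2 = 0 := by omega
          simpa [h2, h2', Bool.not_not] using hrec

lemma isSource_of_A_free (hM : IsMatching G M) (hM' : IsMatching G M') {v : V}
    (hA : partner (mset M M' false) v = none) : IsMSource M M' (v, true) := by
  intro t h
  obtain ⟨w, bw⟩ := t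
  obtain ⟨hb, hmem⟩ := (mstep_eq_some_iff hM hM').mp h
  have hbw : bw = false := by
    cases bw
    · rfl
    · simp at hb
  subst hbw
  rw [partner_eq_none_iff] at hA
  exact hA w (Sym2.eq_swap ▸ hmem)

lemma support_nodup_of_source (hM : IsMatching G M) (hM' : IsMatching G M')
    {v u : V} {b : Bool} {w : G.Walk v u}
    (hs : IsMSource M M' (v, b))
    (hsup : ∀ i (h : i < w.support.length),
      miter M M' i (v, b) = some (w.support.get ⟨i, h⟩, if i % 2 = 0 then b else !b)) :
    w.support.Nodup := by
  rw [List.nodup_iff_injective_get]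
  have key : ∀ (i j : ℕ) (hi : i < w.support.length) (hj : j < w.support.length), i < j →
      w.support.get ⟨i, hi⟩ = w.support.get ⟨j, hj⟩ → False := by
    intro i j hi hj hij heq
    have h1 := hsup i hi
    have h2 := hsup j hj
    rw [heq] at h1
    set x := w.support.get ⟨j, hj⟩ with hx
    rcases Nat.mod_two_eq_zero_or_one i with hpi | hpi <;>
      rcases Nat.mod_two_eq_zero_or_one j with hpj | hpj
    · rw [hpi] at h1; rw [hpj] at h2
      exact miter_inj_times hM hM' hij hs (by simpa using h1) (by simpa using h2)
    · -- i even, j odd : palindrome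
      rw [if_pos hpi] at h1
      rw [if_neg (by omega : ¬ j % 2 = 0)] at h2
      have hsplit : j = i + (j - i) := by omega
      rw [hsplit, miter_add, h1] at h2
      simp only [Option.bind_some] at h2
      obtain ⟨m, hm⟩ : ∃ m, j - i = 2 * m + 1 := ⟨(j - i) / 2, by omega⟩
      rw [hm] at h2
      exact no_palindrome hM hM' m x b h2
    · -- i odd, j even : palindrome
      rw [if_neg (by omega : ¬ i % 2 = 0)] at h1
      rw [if_pos hpj] at h2
      have hsplit : j = i + (j - i) := by omega
      rw [hsplit, miter_add, h1] at h2
      simp only [Option.bind_some] at h2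
      obtain ⟨m, hm⟩ : ∃ m, j - i = 2 * m + 1 := ⟨(j - i) / 2, by omega⟩
      rw [hm] at h2
      refine no_palindrome hM hM' m x (!b) ?_
      simpa [Bool.not_not] using h2
    · rw [hpi] at h1; rw [hpj] at h2
      exact miter_inj_times hM hM' hij hs (by simpa using h1) (by simpa using h2)
  intro ⟨i, hi⟩ ⟨j, hj⟩ heq
  simp only [Fin.mk.injEq]
  rcases Nat.lt_trichotomy i j with hlt | heqij | hgt
  · exact absurd heq (fun hh => key i j hi hj hlt hh)
  · exact heqij
  · exact absurd heq (fun hh => key j i hj hi hgt hh.symm)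

/-- From a terminating trajectory starting at an `A`-free vertex and ending with
`c = false`, we get an augmenting path. -/
lemma aug_of_terminal (hM : IsMatching G M) (hM' : IsMatching G M') {v u : V} {n : ℕ}
    (hA : partner (mset M M' false) v = none)
    (hterm : miter M M' n (v, true) = some (u, false))
    (hstep : mstep M M' (u, false) = none) :
    ∃ (a b : V) (w : G.Walk a b), IsAugPath G M w := by
  have hs : IsMSource M M' (v, true) := isSource_of_A_free hM hM' hA
  obtain ⟨w, hlen, hedges, hsup⟩ := walk_of_miter hM hM' n v true u false hterm
  -- n is odd
  have hnsup : n < w.support.length := by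
    rw [SimpleGraph.Walk.length_support, hlen]; omega
  have hfin := hsup n hnsup
  rw [hterm] at hfin
  have hnodd : n % 2 = 1 := by
    rcases Nat.mod_two_eq_zero_or_one n with h2 | h2
    · rw [h2] at hfin; simp at hfin
    · exact h2
  have hnpos : 0 < n := by omega
  -- v ≠ u
  have hvu : v ≠ u := by
    rintro rfl
    obtain ⟨m, hm⟩ : ∃ m, n = 2 * m + 1 := ⟨n / 2, by omega⟩
    exact no_palindrome hM hM' m v true (by rw [← hm]; simpa using hterm)
  -- v is incident to an M' \ M edge
  have hfirst : ∃ y, s(v, y) ∈ M' \ M := by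
    obtain ⟨m, rfl⟩ : ∃ m, n = m + 1 := ⟨n - 1, by omega⟩
    rw [miter_succ] at hterm
    obtain ⟨t, ht, _⟩ := Option.bind_eq_some_iff.mp hterm
    obtain ⟨y, cy⟩ := t
    obtain ⟨-, hmem⟩ := (mstep_eq_some_iff hM hM').mp ht
    exact ⟨y, hmem⟩
  have hlast : ∃ y, s(u, y) ∈ M' \ M := by
    obtain ⟨m, rfl⟩ : ∃ m, n = m + 1 := ⟨n - 1, by omega⟩
    rw [miter_succ'] at hterm
    obtain ⟨p, _, hpt⟩ := Option.bind_eq_some_iff.mp hterm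
    obtain ⟨y, py⟩ := p
    obtain ⟨hb, hmem⟩ := (mstep_eq_some_iff hM hM').mp hpt
    have : py = true := by
      cases py
      · simp at hb
      · rfl
    subst this
    exact ⟨y, Sym2.eq_swap ▸ (by simpa [mset] using hmem)⟩
  -- unmatched lemma
  have unm : ∀ z : V, (∀ y, s(z, y) ∉ M \ M') → (∃ y, s(z, y) ∈ M' \ M) → Unmatched M z := by
    intro z hzA ⟨y, hy⟩ f hf hzf
    obtain ⟨y', rfl⟩ := Sym2.mem_iff_exists.mp hzf
    by_cases hf' : s(z, y') ∈ M'
    · have hne : s(z, y') ≠ s(z, y) := fun hh => hy.2 (hh ▸ hf)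
      exact hM'.2 _ hf' _ hy.1 hne z (Sym2.mem_mk_left _ _) (Sym2.mem_mk_left _ _)
    · exact hzA y' ⟨hf, hf'⟩
  have hApart : ∀ y, s(v, y) ∉ M \ M' := by
    have := partner_eq_none_iff.mp hA
    simpa [mset] using this
  have hupart : ∀ y, s(u, y) ∉ M \ M' := by
    have := mstep_none_iff.mp hstep
    simpa [mset] using this
  refine ⟨v, u, w, hvu, unm v hApart hfirst, unm u hupart hlast, ⟨?_, ?_⟩, by rw [hlen]; exact hnodd⟩
  · rw [SimpleGraph.Walk.isPath_def]
    exact support_nodup_of_source hM hM' hs hsup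
  · intro i hi
    have := hedges i hi
    rcases Nat.mod_two_eq_zero_or_one i with h2 | h2
    · have hthis : w.edges.get ⟨i, hi⟩ ∈ M' \ M := by
        rw [h2] at this
        simpa [mset] using this
      rw [h2]
      exact iff_of_false hthis.2 (by omega)
    · have hthis : w.edges.get ⟨i, hi⟩ ∈ M \ M' := by
        rw [h2] at this
        simpa [mset] using this
      rw [h2]
      exact iff_of_true hthis.1 rfl

-- ### darts encoding and the injection

@[simp] lemma mset_false : mset M M' false = M \ M' := rfl
@[simp] lemma mset_true : mset M M' true = M' \ M := rfl

noncomputable def decodeD (p : Sym2 V × Bool) : V := if p.2 then p.1.out.1 else p.1.out.2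

noncomputable def encD (S : Set (Sym2 V)) (z : V) : Sym2 V × Bool :=
  (s(z, (partner S z).getD z), decide ((s(z, (partner S z).getD z)).out.1 = z))

lemma out_cases {e : Sym2 V} {z w : V} (he : e = s(z, w)) :
    (e.out.1 = z ∧ e.out.2 = w) ∨ (e.out.1 = w ∧ e.out.2 = z) := by
  have hmk : s(e.out.1, e.out.2) = s(z, w) := by rw [sym2_mk_out e, he]
  exact Sym2.eq_iff.mp hmk

lemma encD_spec {S : Set (Sym2 V)} (hS : IsMatching G S) {z w : V}
    (h : partner S z = some w) :
    (encD S z).1 ∈ S ∧ decodeD (encD S z) = z := by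
  have hzw : s(z, w) ∈ S := (partner_eq_some_iff hS).mp h
  have hne : z ≠ w := mem_ne hS hzw
  have hgd : (partner S z).getD z = w := by rw [h]; rfl
  unfold encD decodeD
  rw [hgd]
  refine ⟨hzw, ?_⟩
  rcases out_cases (rfl : s(z, w) = s(z, w)) with ⟨h1, _⟩ | ⟨h1, h2⟩
  · simp [h1]
  · have hne1 : ¬ ((s(z, w) : Sym2 V).out.1 = z) := by rw [h1]; exact fun hh => hne hh.symm
    simp [hne1, h2]

/-- The two darts of a nondiagonal edge have different decodes. -/
lemma decodeD_inj_bool {e : Sym2 V} {s₁ s₂ : Bool} (hne : e.out.1 ≠ e.out.2)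
    (h : decodeD (e, s₁) = decodeD (e, s₂)) : s₁ = s₂ := by
  cases s₁ <;> cases s₂ <;> simp_all [decodeD]

lemma decodeD_mem (p : Sym2 V × Bool) : decodeD p ∈ p.1 := by
  unfold decodeD
  cases p.2 <;> simp [Sym2.out_fst_mem, Sym2.out_snd_mem]

/-- Sources reaching a common state at possibly different times are equal. -/
lemma source_eq_of_reach_aux (hM : IsMatching G M) (hM' : IsMatching G M')
    {s₁ s₂ t : V × Bool} (hs₁ : IsMSource M M' s₁) {n₁ n₂ : ℕ} (hle : n₁ ≤ n₂)
    (h₁ : miter M M' n₁ s₁ = some t) (h₂ : miter M M' n₂ s₂ = some t) : s₁ = s₂ := by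
  have hsplit : n₂ = (n₂ - n₁) + n₁ := by omega
  rw [hsplit, miter_add] at h₂
  obtain ⟨mid, hmid, hmid2⟩ := Option.bind_eq_some_iff.mp h₂
  have : mid = s₁ := miter_inj hM hM' hmid2 h₁
  subst this
  rcases Nat.eq_zero_or_pos (n₂ - n₁) with hz | hpos
  · rw [hz] at hmid
    simpa using hmid.symm
  · exfalso
    obtain ⟨m, hm⟩ : ∃ m, n₂ - n₁ = m + 1 := ⟨n₂ - n₁ - 1, by omega⟩
    rw [hm, miter_succ'] at hmid
    obtain ⟨q, _, hq⟩ := Option.bind_eq_some_iff.mp hmid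
    exact hs₁ q hq

lemma source_eq_of_reach (hM : IsMatching G M) (hM' : IsMatching G M')
    {s₁ s₂ t : V × Bool} (hs₁ : IsMSource M M' s₁) (hs₂ : IsMSource M M' s₂) {n₁ n₂ : ℕ}
    (h₁ : miter M M' n₁ s₁ = some t) (h₂ : miter M M' n₂ s₂ = some t) : s₁ = s₂ := by
  rcases Nat.le_total n₁ n₂ with hle | hle
  · exact source_eq_of_reach_aux hM hM' hs₁ hle h₁ h₂
  · exact (source_eq_of_reach_aux hM hM' hs₂ hle h₂ h₁).symm

/-- The proposition used for rule 2 of the injection. -/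
def QProp (M M' : Set (Sym2 V)) (y : V) : Prop :=
  ∃ z, (∃ w, partner (M \ M') z = some w) ∧ partner (M' \ M) z = none ∧
    ∃ n, miter M M' n (y, true) = some (z, true)

lemma rule2_exists (hM : IsMatching G M) (hM' : IsMatching G M')
    (hnoaug : ¬ ∃ (a b : V) (w : G.Walk a b), IsAugPath G M w)
    {y x : V} (hA : partner (M \ M') y = none) (hB : partner (M' \ M) y = some x) :
    QProp M M' y := by
  have hA' : partner (mset M M' false) y = none := by rwa [mset_false]
  have hs : IsMSource M M' (y, true) := isSource_of_A_free hM hM' hA'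
  obtain ⟨n, t, hit, htstep⟩ := exists_terminal hM hM' hs
  obtain ⟨z, c⟩ := t
  cases c with
  | false => exact absurd (aug_of_terminal hM hM' hA' hit htstep) hnoaug
  | true =>
    have hnpos : 0 < n := by
      rcases Nat.eq_zero_or_pos n with hz | hp
      · exfalso
        rw [hz, miter_zero, Option.some.injEq] at hit
        have hzy : z = y := (Prod.mk.injEq _ _ _ _).mp hit.symm |>.1
        subst hzy
        rw [mstep_none_iff] at htstep
        exact htstep x ((partner_eq_some_iff (mset_matching hM hM' true)).mp
          (by rwa [mset_true]))
      · exact hp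
    refine ⟨z, ?_, ?_, n, hit⟩
    · -- arrival A-edge at z
      obtain ⟨m, rfl⟩ : ∃ m, n = m + 1 := ⟨n - 1, by omega⟩
      rw [miter_succ'] at hit
      obtain ⟨p, _, hpt⟩ := Option.bind_eq_some_iff.mp hit
      obtain ⟨w', pb⟩ := p
      obtain ⟨hb, hmem⟩ := (mstep_eq_some_iff hM hM').mp hpt
      have hpb : pb = false := by
        cases pb
        · rfl
        · simp at hb
      subst hpb
      rw [mset_false] at hmem
      exact ⟨w', (partner_eq_some_iff (matching_mono hM Set.diff_subset)).mpr
        (Sym2.eq_swap ▸ hmem)⟩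
    · -- z is B-free
      rw [partner_eq_none_iff]
      intro u hu
      rw [mstep_none_iff] at htstep
      exact htstep u (by rwa [mset_true])

lemma dart_card (S : Set (Sym2 V)) : {p : Sym2 V × Bool | p.1 ∈ S}.ncard = 2 * S.ncard := by
  have h1 : {p : Sym2 V × Bool | p.1 ∈ S} = S ×ˢ (Set.univ : Set Bool) := by
    ext ⟨e, b⟩; simp
  rw [h1, ← Nat.card_coe_set_eq, Nat.card_congr (Equiv.Set.prod S Set.univ),
    Nat.card_prod, Nat.card_congr (Equiv.Set.univ Bool), Nat.card_coe_set_eq]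
  simp [Nat.card_eq_fintype_card, mul_comm]

lemma key_card (hM : IsMatching G M) (hM' : IsMatching G M')
    (hnoaug : ¬ ∃ (a b : V) (w : G.Walk a b), IsAugPath G M w) :
    (M' \ M).ncard ≤ (M \ M').ncard := by
  classical
  have hAmatch : IsMatching G (M \ M') := matching_mono hM Set.diff_subset
  have hBmatch : IsMatching G (M' \ M) := matching_mono hM' Set.diff_subset
  set Psi : Sym2 V × Bool → Sym2 V × Bool := fun p =>
    if h1 : ∃ w, partner (M \ M') (decodeD p) = some w then encD (M \ M') (decodeD p)
    else if h2 : QProp M M' (decodeD p) then encD (M \ M') h2.choose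
    else p with hPsi
  -- basic facts for p in DB
  have hBfact : ∀ p : Sym2 V × Bool, p.1 ∈ M' \ M →
      partner (M' \ M) (decodeD p) ≠ none := by
    intro p hp
    obtain ⟨x, hx⟩ := Sym2.mem_iff_exists.mp (decodeD_mem p)
    rw [(partner_eq_some_iff hBmatch).mpr (hx ▸ hp)]
    simp
  -- where Psi lands, with decode data
  have hspec : ∀ p : Sym2 V × Bool, p.1 ∈ M' \ M →
      (Psi p).1 ∈ M \ M' ∧
      ((∃ w, partner (M \ M') (decodeD p) = some w) → decodeD (Psi p) = decodeD p) ∧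
      (partner (M \ M') (decodeD p) = none →
        ∃ z, decodeD (Psi p) = z ∧ partner (M' \ M) z = none ∧
          ∃ n, miter M M' n (decodeD p, true) = some (z, true)) := by
    intro p hp
    by_cases h1 : ∃ w, partner (M \ M') (decodeD p) = some w
    · have heq : Psi p = encD (M \ M') (decodeD p) := by rw [hPsi]; simp only [dif_pos h1]
      obtain ⟨w, hw⟩ := h1
      obtain ⟨hm, hd⟩ := encD_spec hAmatch hw
      refine ⟨heq ▸ hm, fun _ => heq ▸ hd, fun hnone => by rw [hnone] at hw; exact absurd hw (by simp)⟩
    · have h1' : partner (M \ M') (decodeD p) = none := by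
        cases hc : partner (M \ M') (decodeD p)
        · rfl
        · exact absurd ⟨_, hc⟩ h1
      obtain ⟨x, hx⟩ : ∃ x, partner (M' \ M) (decodeD p) = some x := by
        have := hBfact p hp
        cases hc : partner (M' \ M) (decodeD p)
        · exact absurd hc this
        · exact ⟨_, rfl⟩
      have h2 : QProp M M' (decodeD p) := rule2_exists hM hM' hnoaug h1' hx
      have heq : Psi p = encD (M \ M') h2.choose := by
        rw [hPsi]; simp only [dif_neg h1, dif_pos h2]
      obtain ⟨⟨w, hw⟩, hBnone, n, hn⟩ := h2.choose_spec
      obtain ⟨hm, hd⟩ := encD_spec hAmatch hw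
      exact ⟨heq ▸ hm, fun hex => absurd hex h1,
        fun _ => ⟨h2.choose, heq ▸ hd, hBnone, n, hn⟩⟩
  -- recovering the dart from its decode
  have hrecover : ∀ p₁ p₂ : Sym2 V × Bool, p₁.1 ∈ M' \ M → p₂.1 ∈ M' \ M →
      decodeD p₁ = decodeD p₂ → p₁ = p₂ := by
    intro p₁ p₂ hp₁ hp₂ hd
    have hm₁ : decodeD p₁ ∈ p₁.1 := decodeD_mem p₁
    have hm₂ : decodeD p₁ ∈ p₂.1 := hd ▸ decodeD_mem p₂
    have he : p₁.1 = p₂.1 := by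
      by_contra hne
      exact hBmatch.2 _ hp₁ _ hp₂ hne _ hm₁ hm₂
    obtain ⟨e, s₁⟩ := p₁
    obtain ⟨e', s₂⟩ := p₂
    simp only at he
    subst he
    have hout : e.out.1 ≠ e.out.2 := by
      intro hh
      have hmem : s(e.out.1, e.out.2) ∈ M' \ M := by rw [sym2_mk_out]; exact hp₁
      exact mem_ne hBmatch hmem hh
    have : s₁ = s₂ := decodeD_inj_bool hout hd
    rw [this]
  -- injectivity
  have hinj : Set.InjOn Psi {p : Sym2 V × Bool | p.1 ∈ M' \ M} := by
    intro p₁ hp₁ p₂ hp₂ heq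
    have hs₁ := hspec p₁ hp₁
    have hs₂ := hspec p₂ hp₂
    apply hrecover p₁ p₂ hp₁ hp₂
    by_cases h1a : ∃ w, partner (M \ M') (decodeD p₁) = some w <;>
      by_cases h1b : ∃ w, partner (M \ M') (decodeD p₂) = some w
    · rw [← hs₁.2.1 h1a, ← hs₂.2.1 h1b, heq]
    · -- p₁ rule 1, p₂ rule 2 : impossible
      exfalso
      have h1b' : partner (M \ M') (decodeD p₂) = none := by
        cases hc : partner (M \ M') (decodeD p₂)
        · rfl
        · exact absurd ⟨_, hc⟩ h1b
      obtain ⟨z, hz, hzB, _⟩ := hs₂.2.2 h1b'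
      have : decodeD p₁ = z := by rw [← hs₁.2.1 h1a, heq, hz]
      exact hBfact p₁ hp₁ (this ▸ hzB)
    · exfalso
      have h1a' : partner (M \ M') (decodeD p₁) = none := by
        cases hc : partner (M \ M') (decodeD p₁)
        · rfl
        · exact absurd ⟨_, hc⟩ h1a
      obtain ⟨z, hz, hzB, _⟩ := hs₁.2.2 h1a'
      have : decodeD p₂ = z := by rw [← hs₂.2.1 h1b, ← heq, hz]
      exact hBfact p₂ hp₂ (this ▸ hzB)
    · -- both rule 2
      have h1a' : partner (M \ M') (decodeD p₁) = none := by
        cases hc : partner (M \ M') (decodeD p₁)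
        · rfl
        · exact absurd ⟨_, hc⟩ h1a
      have h1b' : partner (M \ M') (decodeD p₂) = none := by
        cases hc : partner (M \ M') (decodeD p₂)
        · rfl
        · exact absurd ⟨_, hc⟩ h1b
      obtain ⟨z₁, hz₁, _, n₁, hn₁⟩ := hs₁.2.2 h1a'
      obtain ⟨z₂, hz₂, _, n₂, hn₂⟩ := hs₂.2.2 h1b'
      have hzz : z₁ = z₂ := by rw [← hz₁, heq, hz₂]
      subst hzz
      have hsrc₁ : IsMSource M M' (decodeD p₁, true) :=
        isSource_of_A_free hM hM' (by rwa [mset_false])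
      have hsrc₂ : IsMSource M M' (decodeD p₂, true) :=
        isSource_of_A_free hM hM' (by rwa [mset_false])
      have := source_eq_of_reach hM hM' hsrc₁ hsrc₂ hn₁ hn₂
      exact (Prod.mk.injEq _ _ _ _).mp this |>.1
  have hcard := Set.ncard_le_ncard_of_injOn (s := {p : Sym2 V × Bool | p.1 ∈ M' \ M})
    (t := {p : Sym2 V × Bool | p.1 ∈ M \ M'}) Psi (fun p hp => (hspec p hp).1) hinj
    (Set.toFinite _)
  rw [dart_card, dart_card] at hcard
  omega

end Part2

end BergeProof

end AltMatch

open AltMatch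

/-- Berge's theorem: `M` is a maximum matching iff there is no `M`-augmenting path. -/
theorem berge_maximum_iff_no_augmenting_path
    {V : Type*} [Fintype V] [DecidableEq V] (G : SimpleGraph V) (M : Set (Sym2 V))
    (hM : IsMatching G M) :
    (∀ M' : Set (Sym2 V), IsMatching G M' → M'.ncard ≤ M.ncard) ↔
      ¬ ∃ (a b : V) (w : G.Walk a b), IsAugPath G M w := by
  constructor
  · intro hmax haug
    obtain ⟨a, b, w, hw⟩ := haug
    obtain ⟨M₂, hM₂, hcard⟩ := part1_aux w.length M hM a b w rfl hw
    have := hmax M₂ hM₂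
    omega
  · intro hnoaug M' hM'
    have h := key_card hM hM' hnoaug
    have e1 := Set.ncard_inter_add_ncard_diff_eq_ncard M' M (Set.toFinite _)
    have e2 := Set.ncard_inter_add_ncard_diff_eq_ncard M M' (Set.toFinite _)
    rw [Set.inter_comm] at e1
    omega
end

section
/- Existence of alternating base trees: given a graph G, matching M, and unmatched vertex f such that every vertex of G is reachable from f by an alternating path, there exists a spanning tree T of G rooted at f such that for every vertex v ≠ f with parent u in T, dist^{γ(v)}(v) = dist^{γ̄(v)}(u) + 1, where γ̄(v) denotes the parity opposite to γ(v). -/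
open Classical

namespace AltMatch

variable {V : Type*}

section AuxExistence

variable {V : Type*} {G : SimpleGraph V} {M : Set (Sym2 V)}

lemma parityOf_succ (n : ℕ) : parityOf (n+1) = !parityOf n := by
  simp only [parityOf]
  rcases Nat.mod_two_eq_zero_or_one n with h | h <;> simp [Nat.add_mod, h]

lemma mod_eq_of_parityOf_eq {a b : ℕ} (h : parityOf a = parityOf b) : a % 2 = b % 2 := by
  simp only [parityOf, decide_eq_decide] at h
  omega

/-- Alternation, as a property of a list of edges. -/
def AltL (M : Set (Sym2 V)) (l : List (Sym2 V)) : Prop :=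
  ∀ (i : ℕ) (h : i < l.length), l[i] ∈ M ↔ i % 2 = 1

lemma alt_iff_altL {u v : V} {w : G.Walk u v} : Alt M w ↔ AltL M w.edges := by
  unfold Alt AltL
  simp [List.get_eq_getElem]

lemma altL_of_prefix {l l' : List (Sym2 V)} (hl : AltL M l) (h : l' <+: l) : AltL M l' := by
  intro i hi
  rw [h.getElem hi]
  exact hl i (hi.trans_le h.length_le)

lemma altL_append_singleton {l : List (Sym2 V)} {e : Sym2 V} (hl : AltL M l)
    (he : e ∈ M ↔ l.length % 2 = 1) : AltL M (l ++ [e]) := by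
  intro i hi
  simp only [List.length_append, List.length_cons, List.length_nil] at hi
  rcases Nat.lt_or_ge i l.length with hlt | hge
  · rw [List.getElem_append_left hlt]
    exact hl i hlt
  · have hieq : i = l.length := by omega
    subst hieq
    simp only [List.getElem_concat_length]
    exact he

/-- Minimum over both parities of the alternating distance. -/
noncomputable def minDist (G : SimpleGraph V) (M : Set (Sym2 V)) (f v : V) : ℕ∞ :=
  min (altDist G M true f v) (altDist G M false f v)

lemma minDist_le (f v : V) (θ : Bool) : minDist G M f v ≤ altDist G M θ f v := by
  cases θ <;> simp [minDist]

lemma gam_spec (f v : V) : altDist G M (gam G M f v) f v = minDist G M f v := by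
  unfold gam minDist
  split
  · exact (min_eq_left (le_of_lt ‹_›)).symm
  · exact (min_eq_right (le_of_not_gt ‹_›)).symm

lemma altDist_le_of_walk {θ : Bool} {f v : V} (w : G.Walk f v) (hw : IsAltPath G M w)
    (hp : parityOf w.length = θ) : altDist G M θ f v ≤ (w.length : ℕ∞) :=
  sInf_le ⟨w, hw, hp, rfl⟩

lemma exists_walk_altDist {θ : Bool} {f v : V} (h : altDist G M θ f v ≠ ⊤) :
    ∃ w : G.Walk f v, IsAltPath G M w ∧ parityOf w.length = θ ∧
      (w.length : ℕ∞) = altDist G M θ f v := by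
  have hne : {n : ℕ∞ | ∃ w : G.Walk f v, IsAltPath G M w ∧ parityOf w.length = θ ∧
      (w.length : ℕ∞) = n}.Nonempty := by
    by_contra hc
    rw [Set.not_nonempty_iff_eq_empty] at hc
    apply h
    unfold altDist
    rw [hc, sInf_empty]
  obtain ⟨w, hw, hp, hd⟩ := csInf_mem hne
  exact ⟨w, hw, hp, hd⟩

lemma exists_good_parent {f : V}
    (hreach : ∀ v : V, altDist G M true f v ≠ ⊤ ∨ altDist G M false f v ≠ ⊤)
    {v : V} (hv : v ≠ f) :
    ∃ u, G.Adj u v ∧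
      altDist G M (gam G M f v) f v = altDist G M (!gam G M f v) f u + 1 ∧
      minDist G M f u < minDist G M f v := by
  classical
  set θ := gam G M f v with hθ
  have hmfin : minDist G M f v ≠ ⊤ := by
    rcases hreach v with h | h
    · exact ne_top_of_le_ne_top h (minDist_le f v true)
    · exact ne_top_of_le_ne_top h (minDist_le f v false)
  have hfin : altDist G M θ f v ≠ ⊤ := by rw [hθ, gam_spec]; exact hmfin
  obtain ⟨w, ⟨hwp, hwa⟩, hwpar, hwd⟩ := exists_walk_altDist hfin
  have hmv : minDist G M f v = (w.length : ℕ∞) := by rw [← gam_spec f v, ← hθ, ← hwd]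
  obtain ⟨a, ha, p', hp'⟩ := SimpleGraph.Walk.exists_eq_cons_of_ne (Ne.symm hv) w
  obtain ⟨u, q, huv, hqc⟩ := SimpleGraph.Walk.exists_cons_eq_concat ha p'
  have hw : w = q.concat huv := by rw [hp', hqc]
  have hqpath : q.IsPath := by
    rw [hw, SimpleGraph.Walk.concat_eq_append] at hwp
    exact hwp.of_append_left
  have hedges : w.edges = q.edges ++ [s(u, v)] := by
    rw [hw, SimpleGraph.Walk.edges_concat, List.concat_eq_append]
  have hwaL : AltL M (q.edges ++ [s(u, v)]) := hedges ▸ alt_iff_altL.mp hwa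
  have hqalt : Alt M q := by
    rw [alt_iff_altL]
    exact altL_of_prefix hwaL ⟨[s(u, v)], rfl⟩
  have hqlen : q.length + 1 = w.length := by rw [hw, SimpleGraph.Walk.length_concat]
  have hqpar : parityOf q.length = !θ := by
    have h1 := parityOf_succ q.length
    rw [hqlen, hwpar] at h1
    rw [h1, Bool.not_not]
  have hedge : s(u, v) ∈ M ↔ q.length % 2 = 1 := by
    have h1 := hwaL q.edges.length (by simp)
    simp only [List.getElem_concat_length] at h1
    rwa [SimpleGraph.Walk.length_edges] at h1
  have hle : altDist G M (!θ) f u ≤ (q.length : ℕ∞) :=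
    altDist_le_of_walk q ⟨hqpath, hqalt⟩ hqpar
  have hfin' : altDist G M (!θ) f u ≠ ⊤ :=
    ne_top_of_le_ne_top (WithTop.natCast_ne_top q.length) hle
  obtain ⟨Q, ⟨hQp, hQa⟩, hQpar, hQd⟩ := exists_walk_altDist hfin'
  have hQle : Q.length ≤ q.length := by
    rw [← Nat.cast_le (α := ℕ∞), hQd]
    exact hle
  rcases eq_or_lt_of_le hQle with heq | hlt
  · refine ⟨u, huv, ?_, ?_⟩
    · rw [← hwd, ← hQd, heq, ← hqlen]
      push_cast
      ring
    · have h1 : minDist G M f u ≤ (q.length : ℕ∞) := le_trans (minDist_le f u (!θ)) hle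
      rw [hmv, ← hqlen]
      refine lt_of_le_of_lt h1 ?_
      exact_mod_cast Nat.lt_succ_self q.length
  · exfalso
    by_cases hvQ : v ∈ Q.support
    · have hRp : (Q.takeUntil v hvQ).IsPath := hQp.takeUntil hvQ
      have hRa : Alt M (Q.takeUntil v hvQ) := by
        rw [alt_iff_altL]
        apply altL_of_prefix (alt_iff_altL.mp hQa)
        exact ⟨(Q.dropUntil v hvQ).edges, by
          rw [← SimpleGraph.Walk.edges_append, SimpleGraph.Walk.take_spec]⟩
      have hRle : (Q.takeUntil v hvQ).length ≤ Q.length :=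
        SimpleGraph.Walk.length_takeUntil_le Q hvQ
      have h1 : altDist G M (parityOf (Q.takeUntil v hvQ).length) f v
          ≤ ((Q.takeUntil v hvQ).length : ℕ∞) :=
        altDist_le_of_walk _ ⟨hRp, hRa⟩ rfl
      have h2 : minDist G M f v ≤ ((Q.takeUntil v hvQ).length : ℕ∞) :=
        le_trans (minDist_le f v _) h1
      rw [hmv, ← hqlen] at h2
      have : (Q.takeUntil v hvQ).length < q.length + 1 := by omega
      exact absurd h2 (not_le.mpr (by exact_mod_cast this))
    · have hRp : (Q.concat huv).IsPath := by
        rw [← SimpleGraph.Walk.isPath_reverse_iff, SimpleGraph.Walk.reverse_concat]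
        exact hQp.reverse.cons (by simpa using hvQ)
      have hmod : Q.length % 2 = q.length % 2 :=
        mod_eq_of_parityOf_eq (by rw [hQpar, hqpar])
      have hRa : Alt M (Q.concat huv) := by
        rw [alt_iff_altL, SimpleGraph.Walk.edges_concat, List.concat_eq_append]
        refine altL_append_singleton (alt_iff_altL.mp hQa) ?_
        rw [SimpleGraph.Walk.length_edges, hmod]
        exact hedge
      have hRpar : parityOf (Q.concat huv).length = θ := by
        rw [SimpleGraph.Walk.length_concat, parityOf_succ, hQpar, Bool.not_not]
      have h1 := altDist_le_of_walk (Q.concat huv) ⟨hRp, hRa⟩ hRpar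
      rw [SimpleGraph.Walk.length_concat] at h1
      have h2 : ((Q.length + 1 : ℕ) : ℕ∞) < altDist G M θ f v := by
        rw [← hwd, ← hqlen]
        exact_mod_cast by omega
      exact absurd h1 (not_le.mpr (by exact_mod_cast h2))

end AuxExistence

end AltMatch

open AltMatch

/-- Existence of alternating base trees: if every vertex is reachable from the
unmatched vertex `f` by an alternating path, then an alternating base tree exists. -/
theorem altBaseTree_exists
    {V : Type*} [Fintype V] [DecidableEq V] (G : SimpleGraph V) (M : Set (Sym2 V))
    (f : V) (hM : IsMatching G M) (hf : Unmatched M f)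
    (hreach : ∀ v : V, altDist G M true f v ≠ ⊤ ∨ altDist G M false f v ≠ ⊤) :
    Nonempty (AltBaseTree G M f) := by
  have key : ∀ v, v ≠ f → ∃ u, G.Adj u v ∧
      altDist G M (gam G M f v) f v = altDist G M (!gam G M f v) f u + 1 ∧
      minDist G M f u < minDist G M f v := fun v hv => exists_good_parent hreach hv
  choose u hadj hdist hlt using key
  let parent : V → V := fun v => if h : v = f then f else u v h
  have hproot : parent f = f := dif_pos rfl
  have hpadj : ∀ v, v ≠ f → G.Adj (parent v) v := fun v hv => by
    simp only [parent, dif_neg hv]; exact hadj v hv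
  have hpdist : ∀ v, v ≠ f → altDist G M (gam G M f v) f v
      = altDist G M (!gam G M f v) f (parent v) + 1 := fun v hv => by
    simp only [parent, dif_neg hv]; exact hdist v hv
  have hmfin : ∀ v, minDist G M f v ≠ ⊤ := fun v => by
    rcases hreach v with h | h
    · exact ne_top_of_le_ne_top h (minDist_le f v true)
    · exact ne_top_of_le_ne_top h (minDist_le f v false)
  have hplt : ∀ v, v ≠ f → (minDist G M f (parent v)).toNat < (minDist G M f v).toNat := by
    intro v hv
    have h1 : minDist G M f (parent v) < minDist G M f v := by
      simp only [parent, dif_neg hv]; exact hlt v hv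
    rw [← ENat.coe_toNat (hmfin (parent v)), ← ENat.coe_toNat (hmfin v)] at h1
    exact_mod_cast h1
  have reach : ∀ N v, (minDist G M f v).toNat ≤ N → ∃ n, parent^[n] v = f := by
    intro N
    induction N with
    | zero =>
      intro v hN
      by_cases hv : v = f
      · exact ⟨0, hv⟩
      · exfalso; have := hplt v hv; omega
    | succ N ih =>
      intro v hN
      by_cases hv : v = f
      · exact ⟨0, hv⟩
      · obtain ⟨n, hn⟩ := ih (parent v) (by have := hplt v hv; omega)
        exact ⟨n + 1, by rw [Function.iterate_succ_apply]; exact hn⟩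
  exact ⟨⟨parent, hproot, hpadj, fun v => reach _ v le_rfl, hpdist⟩⟩
end

section
/- In an alternating base tree T, for any vertex v ≠ f with parent p(v), dist^{γ(p(v))}(p(v)) < dist^{γ(v)}(v). Consequently, for any proper descendant v of a vertex u in T, dist^{γ(u)}(u) < dist^{γ(v)}(v). -/
open Classical

open AltMatch

private lemma gam_le_aux {V : Type*} (G : SimpleGraph V) (M : Set (Sym2 V)) (f p : V)
    (θ : Bool) : altDist G M (gam G M f p) f p ≤ altDist G M θ f p := by
  unfold gam
  split_ifs with h
  · cases θ
    · exact h.le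
    · exact le_rfl
  · cases θ
    · exact le_rfl
    · exact le_of_not_gt h

/-- In an alternating base tree, the shortest-alternating-path distance strictly
increases from parent to child, and hence from any vertex to its proper descendants. -/
theorem altBaseTree_dist_strict_mono
    {V : Type*} [Fintype V] [DecidableEq V] (G : SimpleGraph V) (M : Set (Sym2 V))
    (f : V) (hM : IsMatching G M) (hf : Unmatched M f)
    (hreach : ∀ v : V, altDist G M true f v ≠ ⊤ ∨ altDist G M false f v ≠ ⊤)
    (T : AltBaseTree G M f) :
    (∀ v : V, v ≠ f →
      altDist G M (gam G M f (T.parent v)) f (T.parent v) <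
        altDist G M (gam G M f v) f v) ∧
    (∀ u v : V, v ≠ u → T.InSubtree u v →
      altDist G M (gam G M f u) f u < altDist G M (gam G M f v) f v) := by
  have hne : ∀ p : V, altDist G M (gam G M f p) f p ≠ ⊤ := by
    intro p
    rcases hreach p with h | h
    · exact fun ht => h (top_le_iff.mp (ht ▸ gam_le_aux G M f p true))
    · exact fun ht => h (top_le_iff.mp (ht ▸ gam_le_aux G M f p false))
  have h1 : ∀ v : V, v ≠ f →
      altDist G M (gam G M f (T.parent v)) f (T.parent v) <
        altDist G M (gam G M f v) f v := by
    intro v hv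
    rw [T.dist_eq v hv]
    have hle := gam_le_aux G M f (T.parent v) (!gam G M f v)
    have hnt := hne (T.parent v)
    rcases eq_or_ne (altDist G M (!gam G M f v) f (T.parent v)) ⊤ with htop | htop
    · rw [htop]
      exact lt_of_lt_of_le (lt_top_iff_ne_top.mpr hnt) le_top
    · calc altDist G M (gam G M f (T.parent v)) f (T.parent v)
          ≤ altDist G M (!gam G M f v) f (T.parent v) := hle
        _ < altDist G M (!gam G M f v) f (T.parent v) + 1 :=
            ENat.lt_add_one_iff htop |>.mpr le_rfl
  have h2 : ∀ n : ℕ, ∀ u v : V, T.parent^[n] v = u → v ≠ u →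
      altDist G M (gam G M f u) f u < altDist G M (gam G M f v) f v := by
    intro n
    induction n with
    | zero => intro u v h hvu; exact absurd h hvu
    | succ k ih =>
      intro u v h hvu
      have hvf : v ≠ f := by
        rintro rfl
        exact hvu ((Function.iterate_fixed T.parent_root (k + 1)).symm.trans h)
      have hpv := h1 v hvf
      rw [Function.iterate_succ_apply] at h
      by_cases hp : T.parent v = u
      · rw [hp] at hpv; exact hpv
      · exact (ih u (T.parent v) h hp).trans hpv
  exact ⟨h1, fun u v hvu hsub => by obtain ⟨n, hn⟩ := hsub; exact h2 n u v hn hvu⟩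
end

section
/- In an alternating base tree T, any shortest γ(t)-alternating path P from f to t lies at the outside of the subtree T_t: V(P) ∩ V(T_t) = {t}. -/
open Classical

open AltMatch


section Aux
open AltMatch SimpleGraph

variable {V : Type*} {G : SimpleGraph V} {M : Set (Sym2 V)} {f : V}

lemma altDist_le_of_walk {v : V} (w : G.Walk f v) (hw : IsAltPath G M w) :
    altDist G M (parityOf w.length) f v ≤ (w.length : ℕ∞) :=
  sInf_le ⟨w, hw, rfl, rfl⟩

lemma gamDist_le (v : V) (θ : Bool) :
    altDist G M (gam G M f v) f v ≤ altDist G M θ f v := by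
  unfold gam
  split_ifs with h
  · cases θ
    · exact h.le
    · exact le_rfl
  · cases θ
    · exact le_rfl
    · exact le_of_not_gt h

lemma gamDist_ne_top
    (hreach : ∀ v : V, altDist G M true f v ≠ ⊤ ∨ altDist G M false f v ≠ ⊤)
    (v : V) : altDist G M (gam G M f v) f v ≠ ⊤ := by
  rcases hreach v with h | h
  · exact ne_top_of_le_ne_top h (gamDist_le v true)
  · exact ne_top_of_le_ne_top h (gamDist_le v false)

lemma gamDist_parent_lt (T : AltBaseTree G M f)
    (hreach : ∀ v : V, altDist G M true f v ≠ ⊤ ∨ altDist G M false f v ≠ ⊤)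
    {u : V} (hu : u ≠ f) :
    altDist G M (gam G M f (T.parent u)) f (T.parent u)
      < altDist G M (gam G M f u) f u := by
  have hd := T.dist_eq u hu
  have hfin : altDist G M (gam G M f u) f u ≠ ⊤ := gamDist_ne_top hreach u
  set a := altDist G M (!gam G M f u) f (T.parent u) with ha
  have hane : a ≠ ⊤ := by
    intro h
    rw [hd, h] at hfin
    simp at hfin
  calc altDist G M (gam G M f (T.parent u)) f (T.parent u) ≤ a := gamDist_le _ _
    _ < a + 1 := (ENat.add_one_le_iff hane).mp le_rfl
    _ = altDist G M (gam G M f u) f u := hd.symm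

lemma gamDist_subtree_lt (T : AltBaseTree G M f)
    (hreach : ∀ v : V, altDist G M true f v ≠ ⊤ ∨ altDist G M false f v ≠ ⊤)
    {t : V} (ht : t ≠ f) :
    ∀ (n : ℕ) (v : V), T.parent^[n] v = t → v ≠ t →
      altDist G M (gam G M f t) f t < altDist G M (gam G M f v) f v := by
  intro n
  induction n with
  | zero => intro v h hne; exact absurd h hne
  | succ n ih =>
    intro v h hne
    have hvf : v ≠ f := by
      rintro rfl
      rw [Function.iterate_fixed T.parent_root (n + 1)] at h
      exact ht h.symm
    have hlt := gamDist_parent_lt T hreach hvf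
    rw [Function.iterate_succ_apply] at h
    by_cases hpt : T.parent v = t
    · rw [hpt] at hlt
      exact hlt
    · exact lt_trans (ih (T.parent v) h hpt) hlt

lemma alt_takeUntil [DecidableEq V] {v t : V} (P : G.Walk f t) (hP : Alt M P)
    (hv : v ∈ P.support) : Alt M (P.takeUntil v hv) := by
  intro i hi
  have hedges : (P.takeUntil v hv).edges ++ (P.dropUntil v hv).edges = P.edges := by
    rw [← Walk.edges_append, P.take_spec hv]
  have hpre : (P.takeUntil v hv).edges <+: P.edges := ⟨_, hedges⟩
  have hi' : i < P.edges.length := lt_of_lt_of_le hi hpre.length_le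
  have h := hP i hi'
  rw [List.get_eq_getElem] at h ⊢
  rwa [hpre.getElem hi]

lemma length_takeUntil_lt [DecidableEq V] {v t : V} (P : G.Walk f t)
    (hv : v ∈ P.support) (hne : v ≠ t) : (P.takeUntil v hv).length < P.length := by
  have h := congrArg Walk.length (P.take_spec hv)
  rw [Walk.length_append] at h
  have hR : (P.dropUntil v hv).length ≠ 0 := fun h0 =>
    hne (Walk.eq_of_length_eq_zero h0)
  omega

lemma gamDist_lt_of_mem_support [DecidableEq V] {t v : V} (P : G.Walk f t)
    (hP : IsShortestAlt G M (gam G M f t) f t P) (hv : v ∈ P.support) (hne : v ≠ t) :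
    altDist G M (gam G M f v) f v < altDist G M (gam G M f t) f t := by
  obtain ⟨⟨hpath, halt⟩, hpar, hlen⟩ := hP
  have hQalt : IsAltPath G M (P.takeUntil v hv) :=
    ⟨hpath.takeUntil hv, alt_takeUntil P halt hv⟩
  calc altDist G M (gam G M f v) f v
      ≤ ((P.takeUntil v hv).length : ℕ∞) :=
        le_trans (gamDist_le v _) (altDist_le_of_walk _ hQalt)
    _ < (P.length : ℕ∞) := by exact_mod_cast length_takeUntil_lt P hv hne
    _ = altDist G M (gam G M f t) f t := hlen

end Aux

/-- Any shortest `γ(t)`-alternating path from `f` to `t` lies at the outside of the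
subtree `T_t`: it meets `T_t` only in `t`. -/
theorem shortest_gam_path_outside_subtree
    {V : Type*} [Fintype V] [DecidableEq V] (G : SimpleGraph V) (M : Set (Sym2 V))
    (f : V) (hM : IsMatching G M) (hf : Unmatched M f)
    (hreach : ∀ v : V, altDist G M true f v ≠ ⊤ ∨ altDist G M false f v ≠ ⊤)
    (T : AltBaseTree G M f) (t : V) (P : G.Walk f t)
    (hP : IsShortestAlt G M (gam G M f t) f t P) :
    ∀ v ∈ P.support, T.InSubtree t v → v = t := by
  intro v hv hsub
  by_cases hne : v = t
  · exact hne
  exfalso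
  by_cases ht : t = f
  · have h0 : altDist G M (gam G M f t) f t ≤ 0 := by
      rw [ht]
      refine le_trans (gamDist_le f false) (sInf_le ⟨SimpleGraph.Walk.nil, ⟨SimpleGraph.Walk.IsPath.nil, ?_⟩, ?_, ?_⟩)
      · intro i hi
        simp [SimpleGraph.Walk.edges_nil] at hi
      · rfl
      · simp
    obtain ⟨⟨hpath, halt⟩, hpar, hlen⟩ := hP
    rw [← hlen] at h0
    have hlen0 : P.length = 0 := by exact_mod_cast le_antisymm h0 zero_le
    have hsupp : P.support.length = 1 := by
      rw [SimpleGraph.Walk.length_support, hlen0]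
    obtain ⟨a, ha⟩ := List.length_eq_one_iff.mp hsupp
    rw [ha, List.mem_singleton] at hv
    have htmem := P.end_mem_support
    rw [ha, List.mem_singleton] at htmem
    exact hne (hv.trans htmem.symm)
  · obtain ⟨n, hn⟩ := hsub
    exact absurd (gamDist_subtree_lt T hreach ht n v hn hne)
      (not_lt.mpr (gamDist_lt_of_mem_support P hP hv hne).le)
end

section
/- In an alternating base tree T, for any vertex t ≠ f and any shortest γ̄(t)-alternating path P from f to the parent p(t) of t, P does not contain t. -/
open Classical

open AltMatch

lemma gam_min {V : Type*} (G : SimpleGraph V) (M : Set (Sym2 V)) (f t : V) (θ : Bool) :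
    altDist G M (gam G M f t) f t ≤ altDist G M θ f t := by
  unfold gam
  split_ifs with h
  · cases θ
    · exact le_of_lt h
    · exact le_rfl
  · cases θ
    · exact le_rfl
    · exact not_lt.mp h

lemma alt_takeUntil_s7 {V : Type*} [DecidableEq V] {G : SimpleGraph V} {M : Set (Sym2 V)}
    {u v t : V} {w : G.Walk u v} (h : Alt M w) (ht : t ∈ w.support) :
    Alt M (w.takeUntil t ht) := by
  intro i hi
  have hsp := w.take_spec ht
  have hedges : w.edges = (w.takeUntil t ht).edges ++ (w.dropUntil t ht).edges := by
    conv_lhs => rw [← hsp]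
    rw [SimpleGraph.Walk.edges_append]
  have hi' : i < w.edges.length := by
    rw [hedges, List.length_append]; omega
  have := h i hi'
  rwa [show w.edges.get ⟨i, hi'⟩ = (w.takeUntil t ht).edges.get ⟨i, hi⟩ by
    simp only [List.get_eq_getElem, hedges]
    exact List.getElem_append_left hi] at this

lemma altDist_le_of_path {V : Type*} {G : SimpleGraph V} {M : Set (Sym2 V)} {f t : V}
    (w : G.Walk f t) (hw : IsAltPath G M w) :
    altDist G M (parityOf w.length) f t ≤ (w.length : ℕ∞) :=
  sInf_le ⟨w, hw, rfl, rfl⟩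

/-- For `t ≠ f`, any shortest `γ̄(t)`-alternating path from `f` to the parent of `t`
does not contain `t`. -/
theorem shortest_opp_path_to_parent_avoids
    {V : Type*} [Fintype V] [DecidableEq V] (G : SimpleGraph V) (M : Set (Sym2 V))
    (f : V) (hM : IsMatching G M) (hf : Unmatched M f)
    (hreach : ∀ v : V, altDist G M true f v ≠ ⊤ ∨ altDist G M false f v ≠ ⊤)
    (T : AltBaseTree G M f) (t : V) (ht : t ≠ f) (P : G.Walk f (T.parent t))
    (hP : IsShortestAlt G M (!gam G M f t) f (T.parent t) P) :
    t ∉ P.support := by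
  intro htP
  set Q := P.takeUntil t htP with hQ
  have hQpath : Q.IsPath := hP.1.1.takeUntil htP
  have hQalt : Alt M Q := alt_takeUntil_s7 hP.1.2 htP
  -- length facts
  have hlen : Q.length + (P.dropUntil t htP).length = P.length := by
    conv_rhs => rw [← P.take_spec htP]
    rw [SimpleGraph.Walk.length_append]
  have hne : t ≠ T.parent t := (T.parent_adj t ht).ne'
  have hdrop : (P.dropUntil t htP).length ≠ 0 := by
    intro h0
    exact hne ((P.dropUntil t htP).eq_of_length_eq_zero h0)
  have hQlt : Q.length < P.length := by omega
  -- altDist bounds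
  have h1 : altDist G M (gam G M f t) f t ≤ (Q.length : ℕ∞) :=
    le_trans (gam_min G M f t _) (altDist_le_of_path Q ⟨hQpath, hQalt⟩)
  have h2 : altDist G M (gam G M f t) f t =
      altDist G M (!gam G M f t) f (T.parent t) + 1 := T.dist_eq t ht
  have h3 : (P.length : ℕ∞) = altDist G M (!gam G M f t) f (T.parent t) := hP.2.2
  have : ((P.length : ℕ∞) + 1) ≤ (Q.length : ℕ∞) := by
    rw [h3, ← h2]; exact h1
  have : ((P.length + 1 : ℕ) : ℕ∞) ≤ (Q.length : ℕ∞) := by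
    rwa [Nat.cast_add, Nat.cast_one]
  have := Nat.cast_le.mp this
  omega
end

section
/- In an alternating base tree T, let t be a vertex and let P be an alternating path from f to an ancestor-or-self s of t such that level(P) < level(out(s)). Then P contains the tree edge {p(s), s}. In particular, any alternating path from f to t not containing {p(t), t} has level at least level(out(t)). -/
open Classical

open AltMatch

lemma mem_le_foldr_max {α : Type*} [LinearOrder α] {l : List α} {a : α} (init : α)
    (h : a ∈ l) : a ≤ l.foldr max init := by
  induction l with
  | nil => simp at h
  | cons b l ih =>
    rcases List.mem_cons.mp h with rfl | h
    · exact le_max_left _ _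
    · exact le_trans (ih h) (le_max_right _ _)

lemma level_le_walkLevel {V : Type*} {G : SimpleGraph V} {M : Set (Sym2 V)} {f : V}
    (T : AltBaseTree G M f) {a b : V} {w : G.Walk a b} {e : Sym2 V}
    (h : e ∈ w.edges) : level T e ≤ walkLevel T w :=
  mem_le_foldr_max _ (List.mem_map_of_mem (f := level T) h)

/-- If `s ≠ f` is an ancestor-or-self of `t` and `P` is an alternating path from `f`
to `t` with `level(P) < level(out(s))`, then `P` contains the tree edge `{p(s), s}`. -/
theorem low_level_path_contains_parent_edge
    {V : Type*} [Fintype V] [DecidableEq V] (G : SimpleGraph V) (M : Set (Sym2 V))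
    (f : V) (hM : IsMatching G M) (hf : Unmatched M f)
    (hreach : ∀ v : V, altDist G M true f v ≠ ⊤ ∨ altDist G M false f v ≠ ⊤)
    (T : AltBaseTree G M f) (out : V → Sym2 V) (hmoe : IsMOE T out)
    (s t : V) (hs : s ≠ f) (hanc : T.InSubtree s t)
    (P : G.Walk f t) (hP : IsAltPath G M P)
    (hlev : walkLevel T P < outLevel T out s) :
    s(T.parent s, s) ∈ P.edges := by
  classical
  have hfS : ¬ T.InSubtree s f := by
    rintro ⟨n, hn⟩
    rw [Function.iterate_fixed T.parent_root n] at hn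
    exact hs hn.symm
  obtain ⟨d, hd, hdf, hds⟩ :=
    P.exists_boundary_dart {v | ¬ T.InSubtree s v} hfS (by simpa using hanc)
  have hds : T.InSubtree s d.snd := not_not.mp hds
  have hmem : d.edge ∈ P.edges := List.mem_map_of_mem (f := SimpleGraph.Dart.edge) hd
  by_cases htree : T.IsTreeEdge d.edge
  · obtain ⟨v, hvf, hev⟩ := htree
    have hedge : d.edge = s(d.fst, d.snd) := rfl
    rw [hedge, Sym2.eq_iff] at hev
    rcases hev with ⟨h1, h2⟩ | ⟨h1, h2⟩
    · -- d.fst = parent v, d.snd = v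
      obtain ⟨n, hn⟩ := hds
      cases n with
      | zero =>
        simp only [Function.iterate_zero, id] at hn
        have hvs : v = s := h2.symm.trans hn
        have heq : s(T.parent s, s) = d.edge := by rw [hedge, h1, h2, hvs]
        rw [heq]; exact hmem
      | succ m =>
        exfalso
        apply hdf
        rw [h2] at hn
        rw [Function.iterate_succ_apply] at hn
        exact ⟨m, h1 ▸ hn⟩
    · -- d.fst = v, d.snd = parent v
      exfalso
      obtain ⟨n, hn⟩ := hds
      refine hdf ⟨n + 1, ?_⟩
      have hiter : T.parent^[n + 1] d.toProd.1 = T.parent^[n] (T.parent d.toProd.1) :=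
        Function.iterate_succ_apply _ _ _
      rw [hiter, h1, ← h2]
      exact hn
  · have hout : T.IsOutgoing s d.edge :=
      ⟨P.edges_subset_edgeSet hmem, htree, d.fst, d.snd, rfl, hdf, hds⟩
    exfalso
    have hex : ∃ e, T.IsOutgoing s e := ⟨_, hout⟩
    have houtlev : outLevel T out s = level T (out s) := if_pos hex
    have h1 : level T (out s) ≤ level T d.edge := (hmoe s hex).2 _ hout
    have h2 : level T d.edge ≤ walkLevel T P := level_le_walkLevel T hmem
    rw [houtlev] at hlev
    exact absurd (h1.trans h2) (not_le_of_gt hlev)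
end

section
/- In an alternating base tree, for any vertex t with E*(T_t) ≠ ∅ and out(t) = {y_t, z_t} with z_t ∈ V(T_t), if t is bireachable (dist^odd(t), dist^even(t) < ∞), then dist^{γ̄(t)}(t) ≥ dist^{ρ(t)}(z_t) + dist^{ρ(t)}(y_t) + 1 − dist^{γ(t)}(t), where ρ(t) = ρ(out(t)). -/
open Classical

namespace AltMatch

variable {V : Type*}

section Aux

open SimpleGraph

variable {V : Type*} [DecidableEq V] {G : SimpleGraph V} {M : Set (Sym2 V)} {f : V}

private lemma parityOf_eq_iff {m n : ℕ} : parityOf m = parityOf n ↔ m % 2 = n % 2 := by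
  simp only [parityOf, decide_eq_decide]
  omega

private lemma alt_getElem {u v : V} {w : G.Walk u v} (h : Alt M w) (i : ℕ)
    (hi : i < w.edges.length) : (w.edges[i] ∈ M ↔ i % 2 = 1) := by
  simpa [List.get_eq_getElem] using h i hi

private lemma rho_eq_parity {e : Sym2 V} {n : ℕ} (h : e ∈ M ↔ n % 2 = 1) :
    rho M e = parityOf n := by
  unfold rho parityOf
  split_ifs with hm
  · simp [h.mp hm]
  · have : ¬ (n % 2 = 1) := fun hh => hm (h.mpr hh)
    simp [this]

private lemma getElem_middle {α : Type*} (l1 l2 : List α) (e : α) (k : ℕ) (hk : k < l2.length) :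
    (l1 ++ e :: l2)[l1.length + 1 + k]'(by simp; omega) = l2[k] := by
  rw [List.getElem_append_right (by omega : l1.length ≤ l1.length + 1 + k)]
  simp only [show l1.length + 1 + k - l1.length = k + 1 from by omega, List.getElem_cons_succ]

private lemma altDist_le_of_altPath {v : V} (w : G.Walk f v) (hw : IsAltPath G M w) :
    altDist G M (parityOf w.length) f v ≤ w.length :=
  sInf_le ⟨w, hw, rfl, rfl⟩

private lemma exists_shortest (θ : Bool) {v : V} (h : altDist G M θ f v ≠ ⊤) :
    ∃ w : G.Walk f v, IsAltPath G M w ∧ parityOf w.length = θ ∧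
      (w.length : ℕ∞) = altDist G M θ f v := by
  have hne : {n : ℕ∞ | ∃ w : G.Walk f v, IsAltPath G M w ∧ parityOf w.length = θ ∧
      (w.length : ℕ∞) = n}.Nonempty := by
    by_contra hemp
    rw [Set.not_nonempty_iff_eq_empty] at hemp
    apply h
    unfold altDist
    rw [hemp, sInf_empty]
  obtain ⟨w, hw, hp, hl⟩ := csInf_mem hne
  exact ⟨w, hw, hp, hl⟩

private lemma gam_le (θ : Bool) (v : V) :
    altDist G M (gam G M f v) f v ≤ altDist G M θ f v := by
  unfold gam
  split_ifs with h
  · cases θ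
    · exact le_of_lt h
    · exact le_refl _
  · cases θ
    · exact le_refl _
    · exact not_lt.mp h

private lemma alt_of_append_left {u v w : V} {p : G.Walk u v} {q : G.Walk v w}
    (h : Alt M (p.append q)) : Alt M p := by
  intro i hi
  have hlen : i < (p.append q).edges.length := by
    rw [Walk.edges_append, List.length_append]
    omega
  have := h i hlen
  simp only [List.get_eq_getElem] at this ⊢
  have e1 : (p.append q).edges = p.edges ++ q.edges := Walk.edges_append p q
  simp only [e1] at this
  rwa [List.getElem_append_left hi] at this

private lemma alt_takeUntil {u v w : V} {p : G.Walk u v} (h : Alt M p) (hw : w ∈ p.support) :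
    Alt M (p.takeUntil w hw) := by
  apply alt_of_append_left (q := p.dropUntil w hw)
  rw [Walk.take_spec]
  exact h

private lemma exists_crossing_split (P : V → Prop) {u v : V} (R : G.Walk u v) (hv : P v) :
    (∀ z ∈ R.support, P z) ∨ ∃ (x y : V) (hxy : G.Adj x y) (R1 : G.Walk u x) (R2 : G.Walk y v),
      ¬ P x ∧ P y ∧ (∀ z ∈ R2.support, P z) ∧ R = R1.append (Walk.cons hxy R2) := by
  classical
  induction R with
  | nil =>
    left
    intro z hz
    rw [Walk.support_nil, List.mem_singleton] at hz
    exact hz ▸ hv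
  | @cons u w v h p ih =>
    rcases ih hv with hall | ⟨x, y, hxy, R1, R2, hx, hy, hall2, heq⟩
    · by_cases hu : P u
      · left
        intro z hz
        rw [Walk.support_cons, List.mem_cons] at hz
        rcases hz with rfl | hz
        · exact hu
        · exact hall z hz
      · exact Or.inr ⟨u, w, h, Walk.nil, p, hu, hall w p.start_mem_support, hall,
          (Walk.nil_append _).symm⟩
    · exact Or.inr ⟨x, y, hxy, Walk.cons h R1, R2, hx, hy, hall2,
        by rw [heq, Walk.cons_append]⟩

private lemma tree_crossing {G : SimpleGraph V} {M : Set (Sym2 V)} {f : V}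
    (T : AltBaseTree G M f) {t x y : V} (htf : t ≠ f)
    (htree : T.IsTreeEdge s(x, y)) (hx : ¬ T.InSubtree t x) (hy : T.InSubtree t y) :
    y = t ∧ x = T.parent t := by
  obtain ⟨u, huf, hue⟩ := htree
  rcases Sym2.eq_iff.mp hue.symm with ⟨hpu, hu⟩ | ⟨hpu, hu⟩
  · -- parent u = x, u = y
    subst hu
    obtain ⟨n, hn⟩ := hy
    cases n with
    | zero =>
      simp only [Function.iterate_zero_apply] at hn
      exact ⟨hn, by rw [← hn]; exact hpu.symm⟩
    | succ n =>
      exfalso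
      exact hx ⟨n, by rw [← hpu]; rw [Function.iterate_succ_apply] at hn; exact hn⟩
  · -- parent u = y, u = x
    exfalso
    subst hu
    obtain ⟨n, hn⟩ := hy
    exact hx ⟨n + 1, by rw [Function.iterate_succ_apply, hpu]; exact hn⟩

private lemma path_loop_nil {u : V} (p : G.Walk u u) (hp : p.IsPath) : p = Walk.nil := by
  cases p with
  | nil => rfl
  | cons h q =>
    exfalso
    have := hp.support_nodup
    rw [Walk.support_cons] at this
    exact (List.nodup_cons.mp this).1 (Walk.end_mem_support q)

end Aux

end AltMatch

open AltMatch

open SimpleGraph in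

/-- For a bireachable vertex `t` with `out(t) = {y_t, z_t}`, `z_t ∈ T_t`:
`dist^{γ̄(t)}(t) ≥ dist^{ρ(t)}(z_t) + dist^{ρ(t)}(y_t) + 1 − dist^{γ(t)}(t)`. -/
theorem opp_dist_lower_bound_via_moe
    {V : Type*} [Fintype V] [DecidableEq V] (G : SimpleGraph V) (M : Set (Sym2 V))
    (f : V) (hM : IsMatching G M) (hf : Unmatched M f)
    (hreach : ∀ v : V, altDist G M true f v ≠ ⊤ ∨ altDist G M false f v ≠ ⊤)
    (T : AltBaseTree G M f) (out : V → Sym2 V) (hmoe : IsMOE T out)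
    (t yt zt : V)
    (hstar : ∃ e, T.IsOutgoing t e ∧ levelSum G M f e ≠ ⊤)
    (hout : out t = s(yt, zt)) (hzt : T.InSubtree t zt) (hyt : ¬ T.InSubtree t yt)
    (hodd : altDist G M true f t ≠ ⊤) (heven : altDist G M false f t ≠ ⊤) :
    altDist G M (!gam G M f t) f t ≥
      altDist G M (rho M (out t)) f zt + altDist G M (rho M (out t)) f yt + 1 -
        altDist G M (gam G M f t) f t := by
  classical
  have htf : t ≠ f := by
    rintro rfl
    obtain ⟨n, hn⟩ := T.parent_reaches yt
    exact hyt ⟨n, hn⟩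
  have hsub_t : T.InSubtree t t := ⟨0, rfl⟩
  have hf_not : ¬ T.InSubtree t f := by
    rintro ⟨n, hn⟩
    rw [Function.iterate_fixed T.parent_root n] at hn
    exact htf hn.symm
  have hgamfin : altDist G M (gam G M f t) f t ≠ ⊤ := by
    cases hg : gam G M f t
    · rw [hg] at *; exact heven
    · rw [hg] at *; exact hodd
  have hbarfin : altDist G M (!gam G M f t) f t ≠ ⊤ := by
    cases hg : gam G M f t
    · simpa using hodd
    · simpa using heven
  obtain ⟨W, hW, hWpar, hWlen⟩ := exists_shortest (gam G M f t) hgamfin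
  obtain ⟨R, hR, hRpar, hRlen⟩ := exists_shortest (!gam G M f t) hbarfin
  have habpar : W.length % 2 ≠ R.length % 2 := by
    intro hh
    have h2 := parityOf_eq_iff.mpr hh
    rw [hWpar, hRpar] at h2
    cases gam G M f t <;> simp at h2
  -- depth lemma : vertices strictly below t in the tree are far
  have depth : ∀ (n : ℕ) (v : V), T.parent^[n] v = t → ∀ θ : Bool,
      (W.length : ℕ∞) + n ≤ altDist G M θ f v := by
    intro n
    induction n with
    | zero =>
      intro v hv θ
      simp only [Function.iterate_zero_apply] at hv
      subst hv
      rw [Nat.cast_zero, add_zero, hWlen]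
      exact gam_le θ v
    | succ n ih =>
      intro v hv θ
      have hvf : v ≠ f := by
        rintro rfl
        rw [Function.iterate_fixed T.parent_root] at hv
        exact htf hv.symm
      have hpv : T.parent^[n] (T.parent v) = t := by
        rw [← Function.iterate_succ_apply]; exact hv
      calc (W.length : ℕ∞) + ((n+1 : ℕ) : ℕ∞)
          = ((W.length : ℕ∞) + (n : ℕ∞)) + 1 := by push_cast; ring
        _ ≤ altDist G M (!gam G M f v) f (T.parent v) + 1 :=
            add_le_add (ih (T.parent v) hpv _) le_rfl
        _ = altDist G M (gam G M f v) f v := (T.dist_eq v hvf).symm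
        _ ≤ altDist G M θ f v := gam_le θ v
  -- W avoids the subtree T_t except at t itself
  have CA : ∀ v ∈ W.support, T.InSubtree t v → v = t := by
    intro v hv hsubv
    by_contra hne
    obtain ⟨n, hn⟩ := hsubv
    have hn0 : n ≠ 0 := by
      rintro rfl
      exact hne hn
    obtain ⟨m, rfl⟩ := Nat.exists_eq_succ_of_ne_zero hn0
    have hd := depth (m+1) v hn (parityOf (W.takeUntil v hv).length)
    have hup : altDist G M (parityOf (W.takeUntil v hv).length) f v
        ≤ ((W.takeUntil v hv).length : ℕ∞) :=
      altDist_le_of_altPath _ ⟨hW.1.takeUntil hv, alt_takeUntil hW.2 hv⟩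
    have hle : ((W.takeUntil v hv).length : ℕ∞) ≤ (W.length : ℕ∞) := by
      exact_mod_cast Walk.length_takeUntil_le W hv
    have hcontra : (W.length : ℕ∞) + ((m+1:ℕ) : ℕ∞) ≤ (W.length : ℕ∞) + 0 := by
      rw [add_zero]; exact hd.trans (hup.trans hle)
    have hWfin : (W.length : ℕ∞) ≠ ⊤ := by
      exact_mod_cast WithTop.natCast_ne_top W.length
    have := (WithTop.add_le_add_iff_left hWfin).mp hcontra
    exact absurd (WithTop.coe_le_coe.mp this : m + 1 ≤ 0) (by omega)
  -- split W at its last crossing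
  obtain hallW | ⟨xW, yW, hadjW, W1, W2, hxW, hyW, hallW2, hWeq⟩ :=
    exists_crossing_split (T.InSubtree t) W hsub_t
  · exact absurd (hallW f W.start_mem_support) hf_not
  have hyWt : yW = t := by
    apply CA yW _ hyW
    rw [hWeq, Walk.support_append]
    refine List.mem_append.mpr (Or.inr ?_)
    rw [Walk.support_cons]
    exact W2.start_mem_support
  have hyWt' := hyWt.symm
  subst hyWt'
  have hW2nil : W2 = Walk.nil := by
    apply path_loop_nil
    have hp := hW.1
    rw [hWeq] at hp
    exact hp.of_append_right.of_cons
  subst hW2nil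
  have hWedges : W.edges = W1.edges ++ [s(xW, t)] := by
    rw [hWeq]; simp
  have hWlen1 : W.length = W1.length + 1 := by
    rw [hWeq]; simp
  have hMW : (s(xW, t) ∈ M ↔ W1.length % 2 = 1) := by
    have hlt : W1.edges.length < W.edges.length := by
      rw [hWedges]; simp
    have h0 := alt_getElem hW.2 W1.edges.length hlt
    simp only [hWedges] at h0
    rw [List.getElem_append_right (le_refl W1.edges.length)] at h0
    simp only [Nat.sub_self, List.getElem_cons_zero, Walk.length_edges] at h0
    exact h0
  -- certificate: an outgoing edge of small level-sum
  have hcert : ∃ g : Sym2 V, T.IsOutgoing t g ∧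
      levelSum G M f g + 1 ≤ (R.length : ℕ∞) + (W.length : ℕ∞) := by
    by_cases htreeW : T.IsTreeEdge s(xW, t)
    · -- W ends with the tree edge; use R instead
      obtain ⟨-, hxWp⟩ := tree_crossing T htf htreeW hxW hsub_t
      obtain hallR | ⟨xR, yR, hadjR, R1, R2, hxR, hyR, hallR2, hReq⟩ :=
        exists_crossing_split (T.InSubtree t) R hsub_t
      · exact absurd (hallR f R.start_mem_support) hf_not
      have hRedges : R.edges = R1.edges ++ s(xR, yR) :: R2.edges := by
        rw [hReq]; simp
      have hRlen2 : R.length = R1.length + 1 + R2.length := by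
        rw [hReq]; simp; omega
      have hMg : (s(xR, yR) ∈ M ↔ R1.length % 2 = 1) := by
        have hlt : R1.edges.length < R.edges.length := by
          rw [hRedges]; simp
        have h0 := alt_getElem hR.2 R1.edges.length hlt
        simp only [hRedges] at h0
        rw [List.getElem_append_right (le_refl R1.edges.length)] at h0
        simp only [Nat.sub_self, List.getElem_cons_zero, Walk.length_edges] at h0
        exact h0
      by_cases htreeR : T.IsTreeEdge s(xR, yR)
      · -- both shortest paths end with the same tree edge: parity contradiction
        exfalso
        obtain ⟨hyRt, hxRp⟩ := tree_crossing T htf htreeR hxR hyR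
        have hyRt' := hyRt.symm
        subst hyRt' 
        have hR2nil : R2 = Walk.nil := by
          apply path_loop_nil
          have hp := hR.1
          rw [hReq] at hp
          exact hp.of_append_right.of_cons
        subst hR2nil
        simp only [Walk.length_nil, add_zero] at hRlen2
        have hsame : s(xW, t) = s(xR, t) := by rw [hxWp, hxRp]
        rw [hsame] at hMW
        have hiff : (W1.length % 2 = 1) ↔ (R1.length % 2 = 1) := hMW.symm.trans hMg
        have hpar2 : W1.length % 2 = R1.length % 2 := by
          rcases Nat.mod_two_eq_zero_or_one W1.length with h1 | h1 <;>
            rcases Nat.mod_two_eq_zero_or_one R1.length with h2 | h2 <;>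
              simp [h1, h2] at hiff <;> omega
        exact habpar (by omega)
      · -- R's last crossing edge is a non-tree outgoing edge: splice
        refine ⟨s(xR, yR), ⟨G.mem_edgeSet.mpr hadjR, htreeR, xR, yR, rfl, hxR, hyR⟩, ?_⟩
        have hrho : rho M s(xR, yR) = parityOf R1.length := rho_eq_parity hMg
        have hR1path : R1.IsPath := by
          have hp := hR.1; rw [hReq] at hp; exact hp.of_append_left
        have hR1alt : Alt M R1 := by
          apply alt_of_append_left (q := Walk.cons hadjR R2)
          rw [← hReq]; exact hR.2
        have hxbound : altDist G M (parityOf R1.length) f xR ≤ (R1.length : ℕ∞) :=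
          altDist_le_of_altPath R1 ⟨hR1path, hR1alt⟩
        have hR2path : R2.IsPath := by
          have hp := hR.1; rw [hReq] at hp; exact hp.of_append_right.of_cons
        set Z : G.Walk f yR := W.append R2.reverse with hZdef
        have hZlen : Z.length = W.length + R2.length := by
          rw [hZdef, Walk.length_append, Walk.length_reverse]
        have hZedges : Z.edges = W.edges ++ R2.edges.reverse := by
          rw [hZdef, Walk.edges_append, Walk.edges_reverse]
        have hZpath : Z.IsPath := by
          rw [Walk.isPath_def, hZdef, Walk.support_append]
          have hnodupRev := hR2path.reverse.support_nodup
          rw [Walk.support_eq_cons R2.reverse] at hnodupRev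
          obtain ⟨htnotin, htailnodup⟩ := List.nodup_cons.mp hnodupRev
          apply List.Nodup.append hW.1.support_nodup htailnodup
          intro z hzW hztail
          have hzne : z ≠ t := by
            rintro rfl
            exact htnotin hztail
          have hzR2 : z ∈ R2.support := by
            have hz2 : z ∈ R2.reverse.support := by
              rw [Walk.support_eq_cons R2.reverse]
              exact List.mem_cons_of_mem _ hztail
            rwa [Walk.support_reverse, List.mem_reverse] at hz2
          exact hzne (CA z hzW (hallR2 z hzR2))
        have hZalt : Alt M Z := by
          intro i hi
          simp only [List.get_eq_getElem]
          have hi' : i < W.edges.length + R2.edges.length := by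
            have h1 := hi
            rw [hZedges, List.length_append, List.length_reverse] at h1
            exact h1
          rw [List.getElem_of_eq hZedges]
          by_cases hiW : i < W.edges.length
          · rw [List.getElem_append_left hiW]
            exact alt_getElem hW.2 i hiW
          · push_neg at hiW
            rw [List.getElem_append_right (by simpa using hiW)]
            rw [List.getElem_reverse]
            set k := R2.edges.length - 1 - (i - W.edges.length) with hkdef
            have hklt : k < R2.edges.length := by omega
            have hidx : R1.edges.length + 1 + k < R.edges.length := by
              rw [hRedges]
              simp only [List.length_append, List.length_cons]
              omega
            have h0 := alt_getElem hR.2 (R1.edges.length + 1 + k) hidx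
            rw [List.getElem_of_eq hRedges] at h0
            rw [getElem_middle R1.edges R2.edges s(xR, yR) k hklt] at h0
            rw [h0]
            have lW : W.edges.length = W.length := Walk.length_edges W
            have lR1 : R1.edges.length = R1.length := Walk.length_edges R1
            have lR2 : R2.edges.length = R2.length := Walk.length_edges R2
            omega
        have hybound : altDist G M (parityOf R1.length) f yR ≤ (Z.length : ℕ∞) := by
          have hp : parityOf Z.length = parityOf R1.length := by
            apply parityOf_eq_iff.mpr
            rw [hZlen]
            omega
          have hb := altDist_le_of_altPath Z ⟨hZpath, hZalt⟩
          rwa [hp] at hb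
        have hsumeq : levelSum G M f s(xR, yR) =
            altDist G M (rho M s(xR, yR)) f xR + altDist G M (rho M s(xR, yR)) f yR := by
          simp [levelSum]
        calc levelSum G M f s(xR, yR) + 1
            ≤ ((R1.length : ℕ∞) + (Z.length : ℕ∞)) + 1 := by
              rw [hsumeq, hrho]
              exact add_le_add (add_le_add hxbound hybound) le_rfl
          _ = (R.length : ℕ∞) + (W.length : ℕ∞) := by
              rw [hZlen, hRlen2]; push_cast; ring
    · -- W's last edge is a non-tree outgoing edge
      refine ⟨s(xW, t), ⟨G.mem_edgeSet.mpr hadjW, htreeW, xW, t, rfl, hxW, hsub_t⟩, ?_⟩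
      have hrho : rho M s(xW, t) = parityOf W1.length := rho_eq_parity hMW
      have hW1path : W1.IsPath := by
        have hp := hW.1
        rw [hWeq] at hp
        exact hp.of_append_left
      have hW1alt : Alt M W1 := by
        apply alt_of_append_left (q := Walk.cons hadjW Walk.nil)
        rw [← hWeq]
        exact hW.2
      have hxbound : altDist G M (parityOf W1.length) f xW ≤ (W1.length : ℕ∞) :=
        altDist_le_of_altPath W1 ⟨hW1path, hW1alt⟩
      have htbound : altDist G M (parityOf W1.length) f t ≤ (R.length : ℕ∞) := by
        have hpeq : parityOf W1.length = !gam G M f t := by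
          rw [← hRpar]
          apply parityOf_eq_iff.mpr
          omega
        rw [hpeq]
        exact le_of_eq hRlen.symm
      have hsumeq : levelSum G M f s(xW, t) =
          altDist G M (rho M s(xW, t)) f xW + altDist G M (rho M s(xW, t)) f t := by
        simp [levelSum]
      calc levelSum G M f s(xW, t) + 1
          ≤ ((W1.length : ℕ∞) + (R.length : ℕ∞)) + 1 := by
            rw [hsumeq, hrho]
            exact add_le_add (add_le_add hxbound htbound) le_rfl
        _ = (R.length : ℕ∞) + (W.length : ℕ∞) := by
            rw [hWlen1]; push_cast; ring
  -- conclude from minimality of the level of `out t`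
  obtain ⟨g, hog, hsum⟩ := hcert
  obtain ⟨e₀, he₀, -⟩ := hstar
  obtain ⟨houtog, hmin⟩ := hmoe t ⟨e₀, he₀⟩
  have hminlev := hmin g hog
  have houtNT : ¬ T.IsTreeEdge (out t) := houtog.2.1
  have hgNT : ¬ T.IsTreeEdge g := hog.2.1
  rw [level, level, if_neg houtNT, if_neg hgNT] at hminlev
  have hS : levelSum G M f (out t) ≤ levelSum G M f g := by
    rcases (Prod.Lex.le_iff).mp hminlev with h | ⟨h, -⟩
    · exact le_of_lt h
    · exact le_of_eq h
  have hfinal : levelSum G M f (out t) + 1 ≤ (R.length : ℕ∞) + (W.length : ℕ∞) :=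
    le_trans (add_le_add hS le_rfl) hsum
  rw [hout] at hfinal
  have hlso : levelSum G M f s(yt, zt) =
      altDist G M (rho M s(yt, zt)) f yt + altDist G M (rho M s(yt, zt)) f zt := by
    simp [levelSum]
  rw [ge_iff_le, tsub_le_iff_right, hout, ← hRlen, ← hWlen]
  calc altDist G M (rho M s(yt, zt)) f zt + altDist G M (rho M s(yt, zt)) f yt + 1
      = levelSum G M f s(yt, zt) + 1 := by rw [hlso]; ring
    _ ≤ (R.length : ℕ∞) + (W.length : ℕ∞) := hfinal
end
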